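/- arXiv:1912.09153 — 5 statements merged into one kernel-verified Lean document; each statement's English description precedes it below -/
import Mathlib

section
/- Let Ω ⊂ ℝ² be open and bounded, let λ > 0 and ε > 0 be constants, let b : cl(Ω) → ℝ² be continuous, G : cl(Ω) × ℝ² → ℝ continuous, and g : ∂Ω → ℝ continuous. Then every viscosity solution v of (HJ^ε) and (BC^ε) satisfies sup_{cl(Ω)} |v| ≤ max{ λ⁻¹ · max_{x ∈ cl(Ω)} |G(x, 0)|, max_{∂Ω} |g| }. In particular, the union over all ε > 0 of the sets of viscosity solutions of (HJ^ε) and (BC^ε) is uniformly bounded on cl(Ω). -/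
open Filter Topology Set Metric Bornology

noncomputable section

/-- The plane `ℝ²` as a Euclidean space. -/
abbrev E2 : Type := EuclideanSpace ℝ (Fin 2)

/-- Upper semicontinuous envelope of `u` relative to the set `s`. -/
def uscEnv (s : Set E2) (u : E2 → ℝ) (x : E2) : ℝ := limsup u (nhdsWithin x s)

/-- Lower semicontinuous envelope of `u` relative to the set `s`. -/
def lscEnv (s : Set E2) (u : E2 → ℝ) (x : E2) : ℝ := liminf u (nhdsWithin x s)

/-- `u` is a viscosity subsolution of (HJ^ε):
`λ u − ε⁻¹ b · Du + G(x, Du) = 0` in `Ω`. -/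
def IsSubHJ (Ω : Set E2) (lam ep : ℝ) (b : E2 → E2) (G : E2 → E2 → ℝ) (u : E2 → ℝ) : Prop :=
  ∀ φ : E2 → ℝ, ContDiff ℝ 1 φ → ∀ z ∈ Ω,
    IsLocalMaxOn (fun x => uscEnv (closure Ω) u x - φ x) Ω z →
    lam * uscEnv (closure Ω) u z - ep⁻¹ * (inner ℝ (b z) (gradient φ z) : ℝ)
      + G z (gradient φ z) ≤ 0

/-- `u` is a viscosity supersolution of (HJ^ε) in `Ω`. -/
def IsSupHJ (Ω : Set E2) (lam ep : ℝ) (b : E2 → E2) (G : E2 → E2 → ℝ) (u : E2 → ℝ) : Prop :=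
  ∀ φ : E2 → ℝ, ContDiff ℝ 1 φ → ∀ z ∈ Ω,
    IsLocalMinOn (fun x => lscEnv (closure Ω) u x - φ x) Ω z →
    0 ≤ lam * lscEnv (closure Ω) u z - ep⁻¹ * (inner ℝ (b z) (gradient φ z) : ℝ)
      + G z (gradient φ z)

/-- `u` is a (bounded) viscosity subsolution of (HJ^ε) together with the Dirichlet
condition (BC^ε): `u = g` on `∂Ω`, understood in the viscosity sense. -/
def IsSubBVP (Ω : Set E2) (lam ep : ℝ) (b : E2 → E2) (G : E2 → E2 → ℝ) (g : E2 → ℝ)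
    (u : E2 → ℝ) : Prop :=
  (∃ C : ℝ, ∀ x ∈ closure Ω, |u x| ≤ C) ∧ IsSubHJ Ω lam ep b G u ∧
  ∀ φ : E2 → ℝ, ContDiff ℝ 1 φ → ∀ z ∈ frontier Ω,
    IsLocalMaxOn (fun x => uscEnv (closure Ω) u x - φ x) (closure Ω) z →
    min (lam * uscEnv (closure Ω) u z - ep⁻¹ * (inner ℝ (b z) (gradient φ z) : ℝ)
        + G z (gradient φ z))
      (uscEnv (closure Ω) u z - g z) ≤ 0

/-- `u` is a (bounded) viscosity supersolution of (HJ^ε) together with the Dirichlet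
condition (BC^ε): `u = g` on `∂Ω`, understood in the viscosity sense. -/
def IsSupBVP (Ω : Set E2) (lam ep : ℝ) (b : E2 → E2) (G : E2 → E2 → ℝ) (g : E2 → ℝ)
    (u : E2 → ℝ) : Prop :=
  (∃ C : ℝ, ∀ x ∈ closure Ω, |u x| ≤ C) ∧ IsSupHJ Ω lam ep b G u ∧
  ∀ φ : E2 → ℝ, ContDiff ℝ 1 φ → ∀ z ∈ frontier Ω,
    IsLocalMinOn (fun x => lscEnv (closure Ω) u x - φ x) (closure Ω) z →
    0 ≤ max (lam * lscEnv (closure Ω) u z - ep⁻¹ * (inner ℝ (b z) (gradient φ z) : ℝ)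
        + G z (gradient φ z))
      (lscEnv (closure Ω) u z - g z)

/-- `u` is a viscosity solution of (HJ^ε) and (BC^ε). -/
def IsSolBVP (Ω : Set E2) (lam ep : ℝ) (b : E2 → E2) (G : E2 → E2 → ℝ) (g : E2 → ℝ)
    (u : E2 → ℝ) : Prop :=
  IsSubBVP Ω lam ep b G g u ∧ IsSupBVP Ω lam ep b G g u

lemma aux_neBot {s : Set E2} {x : E2} (hx : x ∈ s) : (𝓝[s] x).NeBot :=
  mem_closure_iff_nhdsWithin_neBot.mp (subset_closure hx)

lemma aux_bddle {s : Set E2} {u : E2 → ℝ} {C : ℝ} (hC : ∀ y ∈ s, |u y| ≤ C) {x : E2} :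
    IsBoundedUnder (· ≤ ·) (𝓝[s] x) u :=
  ⟨C, eventually_map.mpr <| by
    filter_upwards [self_mem_nhdsWithin] with a ha using (abs_le.1 (hC a ha)).2⟩

lemma aux_bddge {s : Set E2} {u : E2 → ℝ} {C : ℝ} (hC : ∀ y ∈ s, |u y| ≤ C) {x : E2} :
    IsBoundedUnder (· ≥ ·) (𝓝[s] x) u :=
  ⟨-C, eventually_map.mpr <| by
    filter_upwards [self_mem_nhdsWithin] with a ha using (abs_le.1 (hC a ha)).1⟩

lemma exists_uscEnv_max (s : Set E2) (hs : IsCompact s) (hne : s.Nonempty)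
    (u : E2 → ℝ) (C : ℝ) (hC : ∀ x ∈ s, |u x| ≤ C) :
    ∃ z ∈ s, (∀ x ∈ s, u x ≤ uscEnv s u z) ∧ ∀ x ∈ s, uscEnv s u x ≤ uscEnv s u z := by
  have hne' : (u '' s).Nonempty := hne.image u
  have hbdd : BddAbove (u '' s) := ⟨C, by rintro _ ⟨x, hx, rfl⟩; exact (abs_le.1 (hC x hx)).2⟩
  set S := sSup (u '' s) with hS
  have hseq : ∀ n : ℕ, ∃ x, x ∈ s ∧ S - 1/(n+1) < u x := by
    intro n
    obtain ⟨y, ⟨x, hx, rfl⟩, hy⟩ := exists_lt_of_lt_csSup hne' (show S - 1/((n:ℝ)+1) < S by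
      have : (0:ℝ) < 1/((n:ℝ)+1) := by positivity
      linarith)
    exact ⟨x, hx, hy⟩
  choose x hxs hxu using hseq
  have hux_le : ∀ y ∈ s, u y ≤ S := fun y hy => le_csSup hbdd ⟨y, hy, rfl⟩
  have htend : Tendsto (fun n => u (x n)) atTop (𝓝 S) := by
    have h1 : Tendsto (fun n : ℕ => S - 1/((n:ℝ)+1)) atTop (𝓝 S) := by
      simpa using tendsto_const_nhds.sub (tendsto_one_div_add_atTop_nhds_zero_nat : Tendsto (fun n : ℕ => 1 / ((n:ℝ) + 1)) atTop (𝓝 0))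
    exact tendsto_of_tendsto_of_tendsto_of_le_of_le h1 tendsto_const_nhds
      (fun n => (hxu n).le) (fun n => hux_le _ (hxs n))
  obtain ⟨z, hz, φ, hφ, hzt⟩ := hs.tendsto_subseq hxs
  have hzt' : Tendsto (x ∘ φ) atTop (𝓝[s] z) :=
    tendsto_nhdsWithin_of_tendsto_nhds_of_eventually_within _ hzt
      (Eventually.of_forall fun n => hxs (φ n))
  haveI := aux_neBot hz
  have hWle : ∀ y ∈ s, uscEnv s u y ≤ S := by
    intro y hy
    haveI := aux_neBot hy
    exact limsup_le_of_le ((aux_bddge hC).isCoboundedUnder_le)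
      (by filter_upwards [self_mem_nhdsWithin] with a ha using hux_le a ha)
  have hWz : S ≤ uscEnv s u z := by
    apply le_of_forall_pos_le_add
    intro ε hε
    have hfreq : ∃ᶠ a in 𝓝[s] z, S - ε ≤ u a := by
      apply hzt'.frequently
      have : ∀ᶠ n in atTop, S - ε ≤ u (x (φ n)) := by
        exact (htend.comp hφ.tendsto_atTop).eventually (eventually_ge_nhds (by linarith))
      exact this.frequently
    have := le_limsup_of_frequently_le hfreq (aux_bddle hC)
    have h2 : uscEnv s u z = limsup u (𝓝[s] z) := rfl
    linarith [this]
  exact ⟨z, hz, fun y hy => (hux_le y hy).trans hWz, fun y hy => (hWle y hy).trans hWz⟩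

lemma exists_lscEnv_min (s : Set E2) (hs : IsCompact s) (hne : s.Nonempty)
    (u : E2 → ℝ) (C : ℝ) (hC : ∀ x ∈ s, |u x| ≤ C) :
    ∃ z ∈ s, (∀ x ∈ s, lscEnv s u z ≤ u x) ∧ ∀ x ∈ s, lscEnv s u z ≤ lscEnv s u x := by
  have hne' : (u '' s).Nonempty := hne.image u
  have hbdd : BddBelow (u '' s) := ⟨-C, by rintro _ ⟨x, hx, rfl⟩; exact (abs_le.1 (hC x hx)).1⟩
  set S := sInf (u '' s) with hS
  have hseq : ∀ n : ℕ, ∃ x, x ∈ s ∧ u x < S + 1/(n+1) := by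
    intro n
    obtain ⟨y, ⟨x, hx, rfl⟩, hy⟩ := exists_lt_of_csInf_lt hne' (show S < S + 1/((n:ℝ)+1) by
      have : (0:ℝ) < 1/((n:ℝ)+1) := by positivity
      linarith)
    exact ⟨x, hx, hy⟩
  choose x hxs hxu using hseq
  have hux_le : ∀ y ∈ s, S ≤ u y := fun y hy => csInf_le hbdd ⟨y, hy, rfl⟩
  have htend : Tendsto (fun n => u (x n)) atTop (𝓝 S) := by
    have h1 : Tendsto (fun n : ℕ => S + 1/((n:ℝ)+1)) atTop (𝓝 S) := by
      simpa using tendsto_const_nhds.add (tendsto_one_div_add_atTop_nhds_zero_nat : Tendsto (fun n : ℕ => 1 / ((n:ℝ) + 1)) atTop (𝓝 0))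
    exact tendsto_of_tendsto_of_tendsto_of_le_of_le tendsto_const_nhds h1
      (fun n => hux_le _ (hxs n)) (fun n => (hxu n).le)
  obtain ⟨z, hz, φ, hφ, hzt⟩ := hs.tendsto_subseq hxs
  have hzt' : Tendsto (x ∘ φ) atTop (𝓝[s] z) :=
    tendsto_nhdsWithin_of_tendsto_nhds_of_eventually_within _ hzt
      (Eventually.of_forall fun n => hxs (φ n))
  haveI := aux_neBot hz
  have hWle : ∀ y ∈ s, S ≤ lscEnv s u y := by
    intro y hy
    haveI := aux_neBot hy
    exact le_liminf_of_le ((aux_bddle hC).isCoboundedUnder_ge)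
      (by filter_upwards [self_mem_nhdsWithin] with a ha using hux_le a ha)
  have hWz : lscEnv s u z ≤ S := by
    have key : ∀ ε > (0:ℝ), lscEnv s u z ≤ S + ε := by
      intro ε hε
      have hfreq : ∃ᶠ a in 𝓝[s] z, u a ≤ S + ε := by
        apply hzt'.frequently
        exact ((htend.comp hφ.tendsto_atTop).eventually
          (eventually_le_nhds (by linarith))).frequently
      exact liminf_le_of_frequently_le hfreq (aux_bddge hC)
    by_contra h
    push_neg at h
    have := key ((lscEnv s u z - S)/2) (by linarith)
    linarith
  exact ⟨z, hz, fun y hy => hWz.trans (hux_le y hy), fun y hy => hWz.trans (hWle y hy)⟩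

/-- Every viscosity solution `v` of (HJ^ε) and (BC^ε) satisfies
`sup_{cl Ω} |v| ≤ max { λ⁻¹ · max_{cl Ω} |G(·,0)|, max_{∂Ω} |g| }`; in particular the
union over all `ε > 0` of the sets of viscosity solutions is uniformly bounded on `cl Ω`. -/
theorem viscosity_solutions_uniformly_bounded
    (Ω : Set E2) (hΩopen : IsOpen Ω) (hΩbdd : IsBounded Ω)
    (lam : ℝ) (hlam : 0 < lam)
    (b : E2 → E2) (hb : ContinuousOn b (closure Ω))
    (G : E2 → E2 → ℝ)
    (hG : ContinuousOn (fun p : E2 × E2 => G p.1 p.2) (closure Ω ×ˢ (univ : Set E2)))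
    (g : E2 → ℝ) (hg : ContinuousOn g (frontier Ω)) :
    ∀ ep : ℝ, 0 < ep → ∀ v : E2 → ℝ, IsSolBVP Ω lam ep b G g v →
      ∀ x ∈ closure Ω,
        |v x| ≤ max (lam⁻¹ * sSup ((fun y => |G y 0|) '' closure Ω))
                    (sSup ((fun y => |g y|) '' frontier Ω)) := by
  intro ep hep v hv x hx
  obtain ⟨⟨C, hC⟩, hsubHJ, hsubBC⟩ := hv.1
  obtain ⟨_, hsupHJ, hsupBC⟩ := hv.2
  set s := closure Ω with hsdef
  have hsc : IsCompact s := hΩbdd.isCompact_closure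
  have hne : s.Nonempty := ⟨x, hx⟩
  set M := max (lam⁻¹ * sSup ((fun y => |G y 0|) '' closure Ω))
      (sSup ((fun y => |g y|) '' frontier Ω)) with hMdef
  have hGc : ContinuousOn (fun y => |G y 0|) s := by
    have h1 : ContinuousOn (fun y : E2 => G y 0) s :=
      hG.comp (Continuous.continuousOn (continuous_id.prodMk continuous_const))
        (fun y hy => ⟨hy, mem_univ _⟩)
    exact h1.abs
  have hGb : BddAbove ((fun y => |G y 0|) '' s) := (hsc.image_of_continuousOn hGc).bddAbove
  have hfrc : IsCompact (frontier Ω) :=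
    hsc.of_isClosed_subset isClosed_frontier frontier_subset_closure
  have hgb : BddAbove ((fun y => |g y|) '' frontier Ω) :=
    (hfrc.image_of_continuousOn hg.abs).bddAbove
  have hGM : ∀ z ∈ s, lam⁻¹ * |G z 0| ≤ M := by
    intro z hz
    refine le_trans ?_ (le_max_left _ _)
    exact mul_le_mul_of_nonneg_left (le_csSup hGb ⟨z, hz, rfl⟩) (inv_nonneg.2 hlam.le)
  have hgM : ∀ z ∈ frontier Ω, |g z| ≤ M := fun z hz =>
    (le_csSup hgb ⟨z, hz, rfl⟩).trans (le_max_right _ _)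
  have hdiv : ∀ w A : ℝ, lam * w ≤ A → w ≤ lam⁻¹ * A := by
    intro w A h
    rw [← mul_le_mul_iff_right₀ hlam, mul_inv_cancel_left₀ hlam.ne']
    exact h
  have hdiv' : ∀ w A : ℝ, -A ≤ lam * w → -(lam⁻¹ * A) ≤ w := by
    intro w A h
    rw [← mul_le_mul_iff_right₀ hlam, mul_neg, mul_inv_cancel_left₀ hlam.ne']
    exact h
  -- Upper bound
  have hupper : v x ≤ M := by
    obtain ⟨z, hz, hvle, hWle⟩ := exists_uscEnv_max s hsc hne v C hC
    have hloc : ∀ t : Set E2, t ⊆ s →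
        IsLocalMaxOn (fun y => uscEnv s v y - (fun _ : E2 => (0:ℝ)) y) t z := by
      intro t ht
      filter_upwards [self_mem_nhdsWithin] with y hy
      simpa using hWle y (ht hy)
    have hWzM : uscEnv s v z ≤ M := by
      by_cases hzΩ : z ∈ Ω
      · have h := hsubHJ (fun _ => 0) contDiff_const z hzΩ (hloc Ω subset_closure)
        simp only [gradient_fun_const, inner_zero_right, mul_zero, sub_zero] at h
        have h2 : lam * uscEnv s v z ≤ |G z 0| := by
          have := neg_abs_le (G z 0); linarith
        exact (hdiv _ _ h2).trans (hGM z hz)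
      · have hzfr : z ∈ frontier Ω := by rw [hΩopen.frontier_eq]; exact ⟨hz, hzΩ⟩
        have h := hsubBC (fun _ => 0) contDiff_const z hzfr (hloc (closure Ω) subset_rfl)
        simp only [gradient_fun_const, inner_zero_right, mul_zero, sub_zero] at h
        rcases min_le_iff.mp h with h' | h'
        · have h2 : lam * uscEnv s v z ≤ |G z 0| := by
            have := neg_abs_le (G z 0); linarith
          exact (hdiv _ _ h2).trans (hGM z hz)
        · have : uscEnv s v z ≤ g z := by linarith
          exact this.trans ((le_abs_self _).trans (hgM z hzfr))
    exact (hvle x hx).trans hWzM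
  -- Lower bound
  have hlower : -M ≤ v x := by
    obtain ⟨z, hz, hvle, hWle⟩ := exists_lscEnv_min s hsc hne v C hC
    have hloc : ∀ t : Set E2, t ⊆ s →
        IsLocalMinOn (fun y => lscEnv s v y - (fun _ : E2 => (0:ℝ)) y) t z := by
      intro t ht
      filter_upwards [self_mem_nhdsWithin] with y hy
      simpa using hWle y (ht hy)
    have hWzM : -M ≤ lscEnv s v z := by
      by_cases hzΩ : z ∈ Ω
      · have h := hsupHJ (fun _ => 0) contDiff_const z hzΩ (hloc Ω subset_closure)
        simp only [gradient_fun_const, inner_zero_right, mul_zero, sub_zero] at h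
        have h2 : -|G z 0| ≤ lam * lscEnv s v z := by
          have := le_abs_self (G z 0); linarith
        exact le_trans (neg_le_neg (hGM z hz)) (hdiv' _ _ h2)
      · have hzfr : z ∈ frontier Ω := by rw [hΩopen.frontier_eq]; exact ⟨hz, hzΩ⟩
        have h := hsupBC (fun _ => 0) contDiff_const z hzfr (hloc (closure Ω) subset_rfl)
        simp only [gradient_fun_const, inner_zero_right, mul_zero, sub_zero] at h
        rcases le_max_iff.mp h with h' | h'
        · have h2 : -|G z 0| ≤ lam * lscEnv s v z := by
            have := le_abs_self (G z 0); linarith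
          exact le_trans (neg_le_neg (hGM z hz)) (hdiv' _ _ h2)
        · have h3 : g z ≤ lscEnv s v z := by linarith
          exact le_trans (neg_le_neg (hgM z hzfr)) ((neg_abs_le _).trans h3)
    exact hWzM.trans (hvle x hx)
  exact abs_le.2 ⟨hlower, hupper⟩
end
end

section
/- Let m ∈ ℕ, let U be an open subset of ℝ^m, let E : U → ℝ^m be Lipschitz continuous, let λ ≥ 0 be a constant and f : U → ℝ continuous. Let v : U → ℝ be upper semicontinuous and a viscosity subsolution of λv − E·Dv − f = 0 in U. Let c < d be real numbers and X : (c,d) → U a C¹ curve with X′(t) = E(X(t)) for all t ∈ (c,d). Then for all σ, τ with c < σ < τ < d, e^{−λσ} v(X(σ)) ≤ e^{−λτ} v(X(τ)) + ∫_σ^τ e^{−λt} f(X(t)) dt. -/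
open Filter Topology Set Metric

noncomputable section

lemma hasDerivAt_posPartSq (x : ℝ) :
    HasDerivAt (fun y : ℝ => max y 0 ^ 2) (2 * max x 0) x := by
  rcases lt_trichotomy x 0 with hx | hx | hx
  · have h : (fun y : ℝ => max y 0 ^ 2) =ᶠ[𝓝 x] fun _ => (0:ℝ) := by
      filter_upwards [eventually_lt_nhds hx] with y hy
      simp [max_eq_right hy.le]
    rw [max_eq_right hx.le, mul_zero]
    exact (hasDerivAt_const x (0:ℝ)).congr_of_eventuallyEq h
  · subst hx
    rw [max_self, mul_zero]
    rw [hasDerivAt_iff_tendsto_slope]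
    apply squeeze_zero_norm' (a := fun y : ℝ => |y|)
    · filter_upwards [self_mem_nhdsWithin] with y (hy : y ≠ 0)
      have h1 : max y 0 ^ 2 ≤ y ^ 2 := by
        rcases le_or_gt y 0 with h | h
        · simp [max_eq_right h, sq_nonneg]
        · simp [max_eq_left h.le]
      have hy0 : 0 < |y| := abs_pos.2 hy
      rw [Real.norm_eq_abs, slope_def_field]
      simp only [max_self, ne_eq, sub_zero]
      rw [show (0:ℝ)^2 = 0 by norm_num, sub_zero, abs_div,
        abs_of_nonneg (sq_nonneg (max y 0))]
      calc max y 0 ^ 2 / |y| ≤ y ^ 2 / |y| := by gcongr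
        _ = |y| := by rw [← sq_abs y, sq, mul_div_assoc, div_self hy0.ne', mul_one]
    · exact (continuous_abs.tendsto' 0 0 (by simp)).mono_left nhdsWithin_le_nhds
  · have h : (fun y : ℝ => max y 0 ^ 2) =ᶠ[𝓝 x] fun y => y ^ 2 := by
      filter_upwards [eventually_gt_nhds hx] with y hy
      simp [max_eq_left hy.le]
    rw [max_eq_left hx.le]
    have h2 : HasDerivAt (fun y : ℝ => y ^ 2) (2 * x) x := by
      simpa using hasDerivAt_pow 2 x
    exact h2.congr_of_eventuallyEq h

lemma usc_exists_max {β : Type*} [TopologicalSpace β] {s : Set β}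
    (hs : IsCompact s) (hne : s.Nonempty) {f : β → ℝ}
    (hf : UpperSemicontinuousOn f s) : ∃ x ∈ s, ∀ y ∈ s, f y ≤ f x := by
  by_contra h
  push_neg at h
  choose! Y hY1 hY2 using h
  have hcov : ∀ x (hx : x ∈ s), {z | z ∈ s → f z < f (Y x)} ∈ 𝓝 x := by
    intro x hx
    have h1 := hf x hx (f (Y x)) (hY2 x hx)
    rw [eventually_nhdsWithin_iff] at h1
    exact h1
  obtain ⟨t, hts⟩ := hs.elim_nhds_subcover' (fun x _ => {z | z ∈ s → f z < f (Y x)}) hcov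
  have htne : t.Nonempty := by
    obtain ⟨x₀, hx₀⟩ := hne
    obtain ⟨i, hi, _⟩ := mem_iUnion₂.1 (hts hx₀)
    exact ⟨i, hi⟩
  obtain ⟨b, hbt, hb⟩ := t.exists_max_image (fun x => f (Y x.1)) htne
  have hYb : Y b.1 ∈ s := hY1 b.1 b.2
  obtain ⟨i, hit, hiY⟩ := mem_iUnion₂.1 (hts hYb)
  exact absurd (hb i hit) (not_le.2 (hiY hYb))

lemma usc_comp_cont {β γ : Type*} [TopologicalSpace β] [TopologicalSpace γ]
    {v : γ → ℝ} {U : Set γ} (hv : UpperSemicontinuousOn v U)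
    {Y : β → γ} {s : Set β} (hY : ContinuousOn Y s) (hmap : ∀ x ∈ s, Y x ∈ U) :
    UpperSemicontinuousOn (fun x => v (Y x)) s := by
  intro x hx y hy
  have h1 := hv (Y x) (hmap x hx) y hy
  exact ((hY x hx).tendsto_nhdsWithin hmap).eventually h1

lemma usc_add_cont {β : Type*} [TopologicalSpace β] {s : Set β} {p q : β → ℝ}
    (hp : UpperSemicontinuousOn p s) (hq : ContinuousOn q s) :
    UpperSemicontinuousOn (fun x => p x + q x) s := by
  intro x hx y hy
  simp only at hy
  have hη0 : 0 < (y - (p x + q x)) / 2 := by linarith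
  have h1 := hp x hx (p x + (y - (p x + q x)) / 2) (by linarith)
  have h2 : ∀ᶠ z in 𝓝[s] x, q z < q x + (y - (p x + q x)) / 2 :=
    (hq x hx).eventually_lt_const (by linarith)
  filter_upwards [h1, h2] with z hz1 hz2
  linarith

lemma usc_mul_pos {β : Type*} [TopologicalSpace β] {s : Set β} {p cf : β → ℝ}
    (hp : UpperSemicontinuousOn p s) (hc : ContinuousOn cf s)
    (hpos : ∀ x ∈ s, 0 < cf x) :
    UpperSemicontinuousOn (fun x => cf x * p x) s := by
  intro x hx y hy
  simp only at hy
  have hcx := hpos x hx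
  have hpxy : p x < y / cf x := (lt_div_iff₀' hcx).2 hy
  set b := (y / cf x + p x) / 2 with hb
  have hb1 : p x < b := by rw [hb]; linarith
  have hb2 : cf x * b < y := by
    rw [hb]
    have : cf x * (y / cf x) = y := mul_div_cancel₀ y hcx.ne' |>.symm ▸ by
      field_simp
    nlinarith [hcx]
  have h1 := hp x hx b hb1
  have h2 : ∀ᶠ z in 𝓝[s] x, cf z * b < y :=
    ((hc x hx).mul continuousWithinAt_const).eventually_lt_const hb2
  have h3 : ∀ᶠ z in 𝓝[s] x, 0 < cf z := (hc x hx).eventually_const_lt hcx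
  filter_upwards [h1, h2, h3] with z hz1 hz2 hz3
  calc cf z * p z ≤ cf z * b := by nlinarith
    _ < y := hz2

lemma visc_mono {c d σ τ : ℝ} {w : ℝ → ℝ}
    (hw : UpperSemicontinuousOn w (Ioo c d))
    (hsub : ∀ ψ ψd : ℝ → ℝ, (∀ t ∈ Ioo c d, HasDerivAt ψ (ψd t) t) →
       ContinuousOn ψd (Ioo c d) →
       ∀ t₀ ∈ Ioo c d, IsLocalMaxOn (fun t => w t - ψ t) (Ioo c d) t₀ → 0 ≤ ψd t₀)
    (h1 : c < σ) (h2 : σ < τ) (h3 : τ < d) : w σ ≤ w τ := by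
  by_contra hcon
  push_neg at hcon
  set ε := (w σ - w τ) / (2 * (τ - σ)) with hε
  have hε0 : 0 < ε := div_pos (by linarith) (by linarith)
  set a := (c + σ) / 2 with ha
  have ha1 : c < a := by rw [ha]; linarith
  have ha2 : a < σ := by rw [ha]; linarith
  have hIcc : Icc a τ ⊆ Ioo c d := fun t ht => ⟨lt_of_lt_of_le ha1 ht.1, lt_of_le_of_lt ht.2 h3⟩
  obtain ⟨tM, htM, hM⟩ := usc_exists_max isCompact_Icc
    ⟨a, le_refl a, by linarith⟩ (hw.mono hIcc)
  set M := w tM with hMdef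
  have hσmem : σ ∈ Icc a τ := ⟨ha2.le, h2.le⟩
  have hMσ : w σ ≤ M := hM σ hσmem
  set C := (M - w σ + 1) / (σ - a) ^ 2 with hC
  have hsa : 0 < σ - a := by linarith
  have hC0 : 0 < C := div_pos (by linarith) (by positivity)
  set ψ : ℝ → ℝ := fun t => -(ε * (t - σ)) + C * max (σ - t) 0 ^ 2 with hψ
  set ψd : ℝ → ℝ := fun t => -ε - 2 * C * max (σ - t) 0 with hψd
  have hder : ∀ t : ℝ, HasDerivAt ψ (ψd t) t := by
    intro t
    have hinner : HasDerivAt (fun t : ℝ => σ - t) (-1) t := by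
      simpa using (hasDerivAt_id t).const_sub σ
    have hcomp : HasDerivAt (fun t : ℝ => max (σ - t) 0 ^ 2)
        (2 * max (σ - t) 0 * (-1)) t :=
      (hasDerivAt_posPartSq (σ - t)).comp t hinner
    have hlin : HasDerivAt (fun t : ℝ => -(ε * (t - σ))) (-ε) t := by
      exact (((hasDerivAt_id t).sub_const σ).const_mul ε).neg.congr_deriv (by simp)
    have := hlin.add (hcomp.const_mul C)
    exact this.congr_deriv (by simp only [hψd]; ring)
  have hmaxcont : Continuous fun t : ℝ => max (σ - t) 0 :=
    (continuous_const.sub continuous_id).max continuous_const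
  have hψcont : Continuous ψ :=
    (continuous_const.mul (continuous_id.sub continuous_const)).neg.add
      (continuous_const.mul (hmaxcont.pow 2))
  have hcd : ContinuousOn ψd (Ioo c d) :=
    (continuous_const.sub ((continuous_const.mul hmaxcont))).continuousOn
  set k : ℝ → ℝ := fun t => w t - ψ t with hk
  have hkusc : UpperSemicontinuousOn k (Icc a τ) := by
    have : UpperSemicontinuousOn (fun t => w t + (-ψ t)) (Icc a τ) :=
      usc_add_cont (hw.mono hIcc) hψcont.neg.continuousOn
    simpa [hk, sub_eq_add_neg] using this
  obtain ⟨ts, hts, hks⟩ := usc_exists_max isCompact_Icc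
    ⟨a, le_refl a, by linarith⟩ hkusc
  have hψσ : ψ σ = 0 := by simp [hψ]
  have hkσ : k σ = w σ := by simp [hk, hψσ]
  have hka : k a < w σ := by
    have hwa : w a ≤ M := hM a ⟨le_refl a, by linarith⟩
    have hmax : max (σ - a) 0 = σ - a := max_eq_left hsa.le
    have hψa : ψ a = ε * (σ - a) + C * (σ - a) ^ 2 := by
      rw [hψ]; simp only [hmax]; ring
    have hCval : C * (σ - a) ^ 2 = M - w σ + 1 := by
      rw [hC]; field_simp
    have : k a = w a - ε * (σ - a) - (M - w σ + 1) := by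
      rw [hk]; simp only [hψa, hCval]; ring
    rw [this]
    nlinarith [mul_pos hε0 hsa]
  have hkτ : k τ < w σ := by
    have hmax : max (σ - τ) 0 = 0 := max_eq_right (by linarith)
    have hψτ : ψ τ = -(ε * (τ - σ)) := by rw [hψ]; simp [hmax]
    have hne : τ - σ ≠ 0 := sub_ne_zero.2 h2.ne'
    have hετ : ε * (τ - σ) = (w σ - w τ) / 2 := by
      rw [hε]; field_simp
    have : k τ = w τ + (w σ - w τ) / 2 := by
      rw [hk]; simp only [hψτ, hετ]; ring
    rw [this]; linarith
  have hkσle : w σ ≤ k ts := by rw [← hkσ]; exact hks σ hσmem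
  have hts_int : ts ∈ Ioo a τ := by
    rcases eq_or_lt_of_le hts.1 with h | h
    · exfalso; rw [← h] at hkσle; linarith
    rcases eq_or_lt_of_le hts.2 with h' | h'
    · exfalso; rw [h'] at hkσle; linarith
    exact ⟨h, h'⟩
  have hloc : IsLocalMaxOn (fun t => w t - ψ t) (Ioo c d) ts := by
    have hIoo : Ioo a τ ∈ 𝓝 ts := Ioo_mem_nhds hts_int.1 hts_int.2
    have hev : ∀ᶠ z in 𝓝[Ioo c d] ts, z ∈ Ioo a τ :=
      eventually_nhdsWithin_of_eventually_nhds (eventually_of_mem hIoo fun z hz => hz)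
    filter_upwards [hev] with z hz
    exact hks z (Ioo_subset_Icc_self hz)
  have h0 := hsub ψ ψd (fun t _ => hder t) hcd ts (hIcc hts) hloc
  have hψdts : ψd ts ≤ -ε := by
    have h1 : 0 ≤ max (σ - ts) 0 := le_max_right _ _
    have : 0 ≤ 2 * C * max (σ - ts) 0 := by positivity
    rw [hψd]
    simp only
    linarith
  linarith

lemma time_subsolution
    (m : ℕ) (U : Set (EuclideanSpace ℝ (Fin m))) (hU : IsOpen U)
    (E : EuclideanSpace ℝ (Fin m) → EuclideanSpace ℝ (Fin m))
    (hE : ∃ K : NNReal, LipschitzOnWith K E U)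
    (lam : ℝ)
    (f : EuclideanSpace ℝ (Fin m) → ℝ) (hf : ContinuousOn f U)
    (v : EuclideanSpace ℝ (Fin m) → ℝ) (hv : UpperSemicontinuousOn v U)
    (hvsub : ∀ φ : EuclideanSpace ℝ (Fin m) → ℝ, ContDiff ℝ 1 φ → ∀ z ∈ U,
      IsLocalMaxOn (fun x => v x - φ x) U z →
      lam * v z - (inner ℝ (E z) (gradient φ z) : ℝ) - f z ≤ 0)
    (c d : ℝ)
    (X : ℝ → EuclideanSpace ℝ (Fin m))
    (hXU : ∀ t ∈ Ioo c d, X t ∈ U)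
    (hX : ∀ t ∈ Ioo c d, HasDerivAt X (E (X t)) t)
    (ψ ψd : ℝ → ℝ) (hψ : ∀ t ∈ Ioo c d, HasDerivAt ψ (ψd t) t)
    (hψc : ContinuousOn ψd (Ioo c d))
    (t₀ : ℝ) (ht₀ : t₀ ∈ Ioo c d)
    (hmax : IsLocalMaxOn (fun t => v (X t) - ψ t) (Ioo c d) t₀) :
    lam * v (X t₀) - ψd t₀ - f (X t₀) ≤ 0 := by
  classical
  obtain ⟨K, hK⟩ := hE
  set z₀ := X t₀ with hz₀def
  have hz₀U : z₀ ∈ U := hXU t₀ ht₀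
  obtain ⟨r₀, hr₀, hball⟩ := Metric.isOpen_iff.1 hU z₀ hz₀U
  set r : ℝ := r₀ / 2 with hrdef
  have hr : 0 < r := by positivity
  have hKU : closedBall z₀ r ⊆ U :=
    (closedBall_subset_ball (by rw [hrdef]; linarith)).trans hball
  -- strictified test function
  set psih : ℝ → ℝ := fun t => ψ t + (t - t₀) ^ 2 with hpsihdef
  set psihd : ℝ → ℝ := fun t => ψd t + 2 * (t - t₀) with hpsihddef
  have hpsih : ∀ t ∈ Ioo c d, HasDerivAt psih (psihd t) t := by
    intro t ht
    have h2 : HasDerivAt (fun s : ℝ => (s - t₀) ^ 2) (2 * (t - t₀)) t := by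
      have := ((hasDerivAt_id t).sub_const t₀).pow 2
      exact this.congr_deriv (by simp)
    exact (hψ t ht).add h2
  -- X continuous on Ioo c d
  have hXcont : ∀ t ∈ Ioo c d, ContinuousAt X t := fun t ht => (hX t ht).continuousAt
  -- choose δ
  have hmax' : ∀ᶠ s in 𝓝 t₀, s ∈ Ioo c d → v (X s) - ψ s ≤ v z₀ - ψ t₀ := by
    have := hmax
    rw [IsLocalMaxOn, IsMaxFilter] at this
    rw [← eventually_nhdsWithin_iff]
    exact this
  obtain ⟨δ₀, hδ₀, hmaxball⟩ := Metric.eventually_nhds_iff.1 hmax'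
  have hXt₀ : ∀ᶠ s in 𝓝 t₀, dist (X s) z₀ < r / 2 := by
    have := (hXcont t₀ ht₀).tendsto
    exact this (Metric.ball_mem_nhds z₀ (by positivity))
  obtain ⟨δ₁, hδ₁, hXball⟩ := Metric.eventually_nhds_iff.1 hXt₀
  obtain ⟨δ, hδ, hIδsub, hIδdist⟩ :
      ∃ δ > 0, Icc (t₀ - δ) (t₀ + δ) ⊆ Ioo c d ∧
        ∀ s ∈ Icc (t₀ - δ) (t₀ + δ), dist s t₀ < δ₀ ∧ dist s t₀ < δ₁ := by
    have h1 := ht₀.1; have h2 := ht₀.2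
    refine ⟨min (min (δ₀ / 2) (δ₁ / 2)) (min ((t₀ - c) / 2) ((d - t₀) / 2)),
      lt_min (lt_min (by positivity) (by positivity)) (lt_min (by linarith) (by linarith)),
      ?_, ?_⟩
    · intro s hs
      rw [mem_Icc] at hs
      have ha : min (min (δ₀ / 2) (δ₁ / 2)) (min ((t₀ - c) / 2) ((d - t₀) / 2)) ≤ (t₀ - c) / 2 :=
        (min_le_right _ _).trans (min_le_left _ _)
      have hb : min (min (δ₀ / 2) (δ₁ / 2)) (min ((t₀ - c) / 2) ((d - t₀) / 2)) ≤ (d - t₀) / 2 :=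
        (min_le_right _ _).trans (min_le_right _ _)
      exact ⟨by linarith [hs.1], by linarith [hs.2]⟩
    · intro s hs
      rw [mem_Icc] at hs
      have ha : min (min (δ₀ / 2) (δ₁ / 2)) (min ((t₀ - c) / 2) ((d - t₀) / 2)) ≤ δ₀ / 2 :=
        (min_le_left _ _).trans (min_le_left _ _)
      have hb : min (min (δ₀ / 2) (δ₁ / 2)) (min ((t₀ - c) / 2) ((d - t₀) / 2)) ≤ δ₁ / 2 :=
        (min_le_left _ _).trans (min_le_right _ _)
      rw [Real.dist_eq]
      constructor <;> rw [abs_lt] <;> constructor <;> linarith [hs.1, hs.2]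
  set Iδ : Set ℝ := Icc (t₀ - δ) (t₀ + δ) with hIδdef
  set M₀ : ℝ := v z₀ - ψ t₀ with hM₀def
  have ht₀Iδ : t₀ ∈ Iδ := by
    rw [hIδdef, mem_Icc]; constructor <;> linarith
  have hXnear : ∀ s ∈ Iδ, dist (X s) z₀ < r / 2 := fun s hs =>
    hXball (hIδdist s hs).2
  have hstrict : ∀ s ∈ Iδ, v (X s) - psih s ≤ M₀ - (s - t₀) ^ 2 := by
    intro s hs
    have h1 : v (X s) - ψ s ≤ M₀ := hmaxball (hIδdist s hs).1 (hIδsub hs)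
    have : psih s = ψ s + (s - t₀) ^ 2 := rfl
    rw [this]; linarith
  -- compact product set
  set S : Set (EuclideanSpace ℝ (Fin m) × ℝ) := closedBall z₀ r ×ˢ Iδ with hSdef
  have hScomp : IsCompact S := (isCompact_closedBall z₀ r).prod isCompact_Icc
  have hz₀S : (z₀, t₀) ∈ S := by
    rw [hSdef, mem_prod]
    exact ⟨mem_closedBall_self hr.le, ht₀Iδ⟩
  have hSne : S.Nonempty := ⟨_, hz₀S⟩
  -- upper bound of v on the ball
  obtain ⟨xM, hxM, hCv⟩ := usc_exists_max (isCompact_closedBall z₀ r)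
    ⟨z₀, mem_closedBall_self hr.le⟩ (hv.mono hKU)
  set Cv : ℝ := v xM with hCvdef
  -- psih continuous on Iδ, lower bound
  have hpsihcont : ContinuousOn psih Iδ := fun s hs =>
    ((hpsih s (hIδsub hs)).continuousAt).continuousWithinAt
  obtain ⟨sM, hsM, hCψ⟩ := isCompact_Icc.exists_isMinOn ⟨t₀, ht₀Iδ⟩ hpsihcont
  set Cψ : ℝ := psih sM with hCψdef
  have hCψle : ∀ s ∈ Iδ, Cψ ≤ psih s := fun s hs => hCψ hs
  -- the penalized functionals and their maximizers
  have hΦusc : ∀ n : ℕ, UpperSemicontinuousOn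
      (fun p : EuclideanSpace ℝ (Fin m) × ℝ =>
        v p.1 + (-psih p.2 - (n + 1 : ℝ) * ‖p.1 - X p.2‖ ^ 2)) S := by
    intro n
    apply usc_add_cont
    · exact usc_comp_cont hv (continuous_fst.continuousOn)
        (fun p hp => hKU (by rw [hSdef, mem_prod] at hp; exact hp.1))
    · have hXc : ContinuousOn (fun p : EuclideanSpace ℝ (Fin m) × ℝ => X p.2) S := by
        apply ContinuousOn.comp (t := Iδ) ?_ continuous_snd.continuousOn
          (fun p hp => by rw [hSdef, mem_prod] at hp; exact hp.2)
        intro s hs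
        exact (hXcont s (hIδsub hs)).continuousWithinAt
      have hpsihc : ContinuousOn (fun p : EuclideanSpace ℝ (Fin m) × ℝ => psih p.2) S :=
        ContinuousOn.comp hpsihcont continuous_snd.continuousOn
          (fun p hp => by rw [hSdef, mem_prod] at hp; exact hp.2)
      exact (hpsihc.neg).sub
        ((continuousOn_const).mul
          (((continuous_fst.continuousOn).sub hXc).norm.pow 2))
  have hPex : ∀ n : ℕ, ∃ p ∈ S, ∀ q ∈ S,
      v q.1 - psih q.2 - (n + 1 : ℝ) * ‖q.1 - X q.2‖ ^ 2 ≤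
        v p.1 - psih p.2 - (n + 1 : ℝ) * ‖p.1 - X p.2‖ ^ 2 := by
    intro n
    obtain ⟨p, hpS, hpmax⟩ := usc_exists_max hScomp hSne (hΦusc n)
    refine ⟨p, hpS, fun q hq => ?_⟩
    have := hpmax q hq
    linarith
  choose P hPS hPmax using hPex
  have hPS1 : ∀ n, (P n).1 ∈ closedBall z₀ r := fun n => by
    have := hPS n; rw [hSdef, mem_prod] at this; exact this.1
  have hPS2 : ∀ n, (P n).2 ∈ Iδ := fun n => by
    have := hPS n; rw [hSdef, mem_prod] at this; exact this.2
  have hPU : ∀ n, (P n).1 ∈ U := fun n => hKU (hPS1 n)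
  -- F1
  have hF1 : ∀ n : ℕ, M₀ ≤ v (P n).1 - psih (P n).2 - (n + 1 : ℝ) * ‖(P n).1 - X (P n).2‖ ^ 2 := by
    intro n
    have := hPmax n (z₀, t₀) hz₀S
    have hps : psih t₀ = ψ t₀ := by simp [hpsihdef]
    have hXz : X t₀ = z₀ := rfl
    simp only [hXz, hps, sub_self, norm_zero] at this
    calc M₀ = v z₀ - ψ t₀ - (n + 1 : ℝ) * 0 ^ 2 := by rw [hM₀def]; ring
      _ ≤ _ := this
  -- F2
  have hB : ∀ n : ℕ, (n + 1 : ℝ) * ‖(P n).1 - X (P n).2‖ ^ 2 ≤ Cv - Cψ - M₀ := by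
    intro n
    have h1 := hF1 n
    have h2 : v (P n).1 ≤ Cv := hCv _ (hPS1 n)
    have h3 : Cψ ≤ psih (P n).2 := hCψle _ (hPS2 n)
    linarith
  have hBnn : (0:ℝ) ≤ Cv - Cψ - M₀ := by
    have := hB 0
    nlinarith [norm_nonneg ((P 0).1 - X (P 0).2), sq_nonneg ‖(P 0).1 - X (P 0).2‖]
  -- subsequence
  obtain ⟨pbar, hpbarS, φ, hφmono, hφtend⟩ := hScomp.tendsto_subseq hPS
  have hφatTop : Tendsto φ atTop atTop := hφmono.tendsto_atTop
  have hxtend : Tendsto (fun k => (P (φ k)).1) atTop (𝓝 pbar.1) :=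
    (continuous_fst.tendsto pbar).comp hφtend
  have httend : Tendsto (fun k => (P (φ k)).2) atTop (𝓝 pbar.2) :=
    (continuous_snd.tendsto pbar).comp hφtend
  have hpbar1 : pbar.1 ∈ closedBall z₀ r := by
    rw [hSdef, mem_prod] at hpbarS; exact hpbarS.1
  have hpbar2 : pbar.2 ∈ Iδ := by
    rw [hSdef, mem_prod] at hpbarS; exact hpbarS.2
  have hpbar2cd : pbar.2 ∈ Ioo c d := hIδsub hpbar2
  have hpbar1U : pbar.1 ∈ U := hKU hpbar1
  -- X (t (φ k)) → X pbar.2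
  have hXtt : Tendsto (fun k => X ((P (φ k)).2)) atTop (𝓝 (X pbar.2)) :=
    (hXcont pbar.2 hpbar2cd).tendsto.comp httend
  -- norm difference tends to zero
  have hnormsq : ∀ n : ℕ, ‖(P n).1 - X (P n).2‖ ^ 2 ≤ (Cv - Cψ - M₀) / (n + 1 : ℝ) := by
    intro n
    rw [le_div_iff₀ (by positivity)]
    calc ‖(P n).1 - X (P n).2‖ ^ 2 * (n + 1 : ℝ)
        = (n + 1 : ℝ) * ‖(P n).1 - X (P n).2‖ ^ 2 := by ring
      _ ≤ Cv - Cψ - M₀ := hB n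
  have hdiff0 : Tendsto (fun k => (P (φ k)).1 - X ((P (φ k)).2)) atTop (𝓝 0) := by
    apply squeeze_zero_norm' (a := fun k => Real.sqrt ((Cv - Cψ - M₀) / ((φ k : ℝ) + 1)))
    · filter_upwards with k
      rw [Real.le_sqrt (norm_nonneg _)]
      · exact hnormsq (φ k)
      · exact div_nonneg hBnn (by positivity)
    · have h1 : Tendsto (fun n : ℕ => (Cv - Cψ - M₀) / ((n : ℝ) + 1)) atTop (𝓝 0) := by
        apply Tendsto.div_atTop tendsto_const_nhds
        exact tendsto_atTop_add_const_right _ 1 tendsto_natCast_atTop_atTop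
      have h2 := h1.comp hφatTop
      have := (Real.continuous_sqrt.tendsto' 0 0 (by simp)).comp h2
      exact this
  have hxbar : pbar.1 = X pbar.2 := by
    have h1 : Tendsto (fun k => (P (φ k)).1 - X ((P (φ k)).2)) atTop (𝓝 (pbar.1 - X pbar.2)) :=
      hxtend.sub hXtt
    have := tendsto_nhds_unique h1 hdiff0
    exact sub_eq_zero.1 this
  -- psih continuous at pbar.2
  have hpsihtt : Tendsto (fun k => psih ((P (φ k)).2)) atTop (𝓝 (psih pbar.2)) :=
    ((hpsih pbar.2 hpbar2cd).continuousAt.tendsto).comp httend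
  -- lower bound for v along the sequence
  have hlow : ∀ k, M₀ + psih ((P (φ k)).2) ≤ v ((P (φ k)).1) := by
    intro k
    have h1 := hF1 (φ k)
    have h2 : (0:ℝ) ≤ ((φ k : ℝ) + 1) * ‖(P (φ k)).1 - X ((P (φ k)).2)‖ ^ 2 := by positivity
    linarith
  -- tendsto within U
  have hxtendU : Tendsto (fun k => (P (φ k)).1) atTop (𝓝[U] pbar.1) := by
    rw [tendsto_nhdsWithin_iff]
    exact ⟨hxtend, Eventually.of_forall fun k => hPU (φ k)⟩
  have husc : ∀ y, v pbar.1 < y → ∀ᶠ k in atTop, v ((P (φ k)).1) < y :=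
    fun y hy => hxtendU.eventually (hv pbar.1 hpbar1U y hy)
  -- M₀ + psih pbar.2 ≤ v pbar.1
  have hvlb : M₀ + psih pbar.2 ≤ v pbar.1 := by
    by_contra hcon
    push_neg at hcon
    obtain ⟨y, hy1, hy2⟩ := exists_between hcon
    have h1 := husc y hy1
    have h2 : ∀ᶠ k in atTop, y < M₀ + psih ((P (φ k)).2) :=
      (tendsto_const_nhds.add hpsihtt).eventually_const_lt hy2
    obtain ⟨k, hk1, hk2⟩ := (h1.and h2).exists
    have := hlow k
    linarith
  -- pbar.2 = t₀
  have htbar : pbar.2 = t₀ := by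
    have h1 : v (X pbar.2) - psih pbar.2 ≤ M₀ - (pbar.2 - t₀) ^ 2 := hstrict pbar.2 hpbar2
    rw [← hxbar] at h1
    have h2 : (pbar.2 - t₀) ^ 2 ≤ 0 := by linarith
    have h3 : (pbar.2 - t₀) ^ 2 = 0 := le_antisymm h2 (sq_nonneg _)
    have := pow_eq_zero_iff (n := 2) (by norm_num) |>.1 h3
    linarith [sub_eq_zero.1 this]
  have hxbarz : pbar.1 = z₀ := by rw [hxbar, htbar]
  -- v along sequence tends to v z₀
  have hpsiht₀ : psih t₀ = ψ t₀ := by simp [hpsihdef]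
  have hM₀psih : M₀ + psih t₀ = v z₀ := by rw [hM₀def, hpsiht₀]; ring
  have hvtend : Tendsto (fun k => v ((P (φ k)).1)) atTop (𝓝 (v z₀)) := by
    rw [tendsto_order]
    constructor
    · intro y hy
      have h2 : ∀ᶠ k in atTop, y < M₀ + psih ((P (φ k)).2) := by
        apply (tendsto_const_nhds.add hpsihtt).eventually_const_lt
        rw [htbar, hM₀psih]; exact hy
      filter_upwards [h2] with k hk
      exact lt_of_lt_of_le hk (hlow k)
    · intro y hy
      apply husc
      rw [hxbarz]; exact hy
  -- penalization tends to zero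
  have hpen0 : Tendsto (fun k => ((φ k : ℝ) + 1) * ‖(P (φ k)).1 - X ((P (φ k)).2)‖ ^ 2)
      atTop (𝓝 0) := by
    apply squeeze_zero' (Eventually.of_forall fun k => by positivity)
      (g := fun k => v ((P (φ k)).1) - psih ((P (φ k)).2) - M₀)
    · filter_upwards with k
      have := hF1 (φ k)
      linarith
    · have : Tendsto (fun k => v ((P (φ k)).1) - psih ((P (φ k)).2) - M₀) atTop
          (𝓝 (v z₀ - psih t₀ - M₀)) := by
        apply Tendsto.sub_const
        apply hvtend.sub
        rw [← htbar]; exact hpsihtt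
      have hz : v z₀ - psih t₀ - M₀ = 0 := by rw [hpsiht₀, hM₀def]; ring
      rw [hz] at this; exact this
  have httend₀ : Tendsto (fun k => (P (φ k)).2) atTop (𝓝 t₀) := htbar ▸ httend
  have hxtend₀ : Tendsto (fun k => (P (φ k)).1) atTop (𝓝 z₀) := hxbarz ▸ hxtend
  -- eventually interior
  have hevt : ∀ᶠ k in atTop, (P (φ k)).2 ∈ Ioo (t₀ - δ) (t₀ + δ) :=
    httend₀.eventually (eventually_of_mem (Ioo_mem_nhds (by linarith) (by linarith))
      fun s hs => hs)
  have hevx : ∀ᶠ k in atTop, (P (φ k)).1 ∈ ball z₀ r :=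
    hxtend₀.eventually (eventually_of_mem (ball_mem_nhds z₀ hr) fun x hx => hx)
  -- the key eventual inequality
  have hkey : ∀ᶠ k in atTop,
      lam * v ((P (φ k)).1) - psihd ((P (φ k)).2) - f ((P (φ k)).1) ≤
        2 * (K : ℝ) * (((φ k : ℝ) + 1) * ‖(P (φ k)).1 - X ((P (φ k)).2)‖ ^ 2) := by
    filter_upwards [hevt, hevx] with k hkt hkx
    set n := φ k with hn
    set ξ := (P n).1 with hξ
    set tn := (P n).2 with htn
    set a := X tn with ha
    set N : ℝ := (n : ℝ) + 1 with hN
    have hN0 : 0 < N := by positivity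
    have hξU : ξ ∈ U := hPU n
    have haU : a ∈ U := hXU tn (hIδsub (hPS2 n))
    have htncd : tn ∈ Ioo c d := hIδsub (hPS2 n)
    -- space test function
    set φs : EuclideanSpace ℝ (Fin m) → ℝ := fun x => N * ‖x - a‖ ^ 2 with hφs
    have hφsC1 : ContDiff ℝ 1 φs := by
      apply ContDiff.mul contDiff_const
      exact (contDiff_id.sub contDiff_const).norm_sq ℝ
    -- gradient of test function
    have hgrad : HasGradientAt φs ((2 * N) • (ξ - a)) ξ := by
      rw [hasGradientAt_iff_hasFDerivAt]
      have h1 : HasFDerivAt (fun x : EuclideanSpace ℝ (Fin m) => x - a)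
          (ContinuousLinearMap.id ℝ (EuclideanSpace ℝ (Fin m))) ξ :=
        (hasFDerivAt_id ξ).sub_const a
      have h2 := h1.norm_sq
      have h3 := h2.const_mul N
      refine h3.congr_fderiv ?_
      ext y
      simp only [ContinuousLinearMap.coe_comp', ContinuousLinearMap.coe_id',
        Function.comp_apply, id_eq, ContinuousLinearMap.coe_smul',
        Pi.smul_apply, innerSL_apply_apply, smul_eq_mul]
      rw [InnerProductSpace.toDual_apply_apply]
      rw [real_inner_smul_left]
      ring
    have hgradval : gradient φs ξ = (2 * N) • (ξ - a) := hgrad.gradient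
    -- local max in space
    have hlocmax : IsLocalMaxOn (fun x => v x - φs x) U ξ := by
      have hmem : ∀ᶠ y in 𝓝[U] ξ, y ∈ ball z₀ r :=
        eventually_nhdsWithin_of_eventually_nhds
          (eventually_of_mem (isOpen_ball.mem_nhds hkx) fun y hy => hy)
      filter_upwards [hmem] with y hy
      have hyS : (y, tn) ∈ S := by
        rw [hSdef, mem_prod]
        exact ⟨ball_subset_closedBall hy, hPS2 n⟩
      have hPm := hPmax n (y, tn) hyS
      rw [← hξ, ← htn, ← hN, ← ha] at hPm
      simp only [hφs]
      linarith
    -- apply the viscosity subsolution property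
    have hsubineq := hvsub φs hφsC1 ξ hξU hlocmax
    rw [hgradval] at hsubineq
    -- time derivative vanishes
    have htder : HasDerivAt (fun s => v ξ - psih s - N * ‖ξ - X s‖ ^ 2)
        (-psihd tn - N * (2 * (inner ℝ (ξ - a) (-E a) : ℝ))) tn := by
      have h1 : HasDerivAt (fun s : ℝ => ξ - X s) (-E a) tn := by
        simpa using (hX tn htncd).const_sub ξ
      have h2 := h1.norm_sq
      have h3 := (hpsih tn htncd).const_sub (v ξ)
      have h4 := h3.sub (h2.const_mul N)
      exact h4
    have htmax : IsLocalMax (fun s => v ξ - psih s - N * ‖ξ - X s‖ ^ 2) tn := by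
      have hmem : ∀ᶠ s in 𝓝 tn, s ∈ Ioo (t₀ - δ) (t₀ + δ) :=
        eventually_of_mem (isOpen_Ioo.mem_nhds hkt) fun s hs => hs
      filter_upwards [hmem] with s hs
      have hsS : (ξ, s) ∈ S := by
        rw [hSdef, mem_prod]
        exact ⟨hPS1 n, Ioo_subset_Icc_self hs⟩
      have hPm := hPmax n (ξ, s) hsS
      rw [← hξ, ← htn, ← hN, ← ha] at hPm
      linarith
    have hD0 := htmax.hasDerivAt_eq_zero htder
    -- hence psihd tn = ⟪E a, p⟫
    have hEa : psihd tn = (inner ℝ (E a) ((2 * N) • (ξ - a)) : ℝ) := by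
      have h1 : (inner ℝ (ξ - a) (-E a) : ℝ) = -(inner ℝ (ξ - a) (E a) : ℝ) := by
        rw [inner_neg_right]
      rw [h1] at hD0
      rw [real_inner_smul_right, real_inner_comm]
      linear_combination -1 * hD0
    -- Lipschitz estimate
    have hlip : dist (E ξ) (E a) ≤ (K : ℝ) * dist ξ a :=
      lipschitzOnWith_iff_dist_le_mul.1 hK ξ hξU a haU
    have hnormE : ‖E ξ - E a‖ ≤ (K : ℝ) * ‖ξ - a‖ := by
      rw [← dist_eq_norm, ← dist_eq_norm]; exact hlip
    have hinner : (inner ℝ (E ξ) ((2 * N) • (ξ - a)) : ℝ) -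
        (inner ℝ (E a) ((2 * N) • (ξ - a)) : ℝ) ≤
        2 * (K : ℝ) * (N * ‖ξ - a‖ ^ 2) := by
      have h1 : (inner ℝ (E ξ - E a) ((2 * N) • (ξ - a)) : ℝ) ≤
          ‖E ξ - E a‖ * ‖(2 * N) • (ξ - a)‖ := real_inner_le_norm _ _
      have h2 : ‖(2 * N) • (ξ - a)‖ = (2 * N) * ‖ξ - a‖ := by
        rw [norm_smul, Real.norm_eq_abs, abs_of_pos (by positivity)]
      have h4 : (inner ℝ (E ξ) ((2 * N) • (ξ - a)) : ℝ) -
          (inner ℝ (E a) ((2 * N) • (ξ - a)) : ℝ) =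
          (inner ℝ (E ξ - E a) ((2 * N) • (ξ - a)) : ℝ) := (inner_sub_left _ _ _).symm
      rw [h4]
      calc (inner ℝ (E ξ - E a) ((2 * N) • (ξ - a)) : ℝ)
          ≤ ‖E ξ - E a‖ * ‖(2 * N) • (ξ - a)‖ := h1
        _ ≤ ((K : ℝ) * ‖ξ - a‖) * ((2 * N) * ‖ξ - a‖) := by
            rw [h2]
            apply mul_le_mul_of_nonneg_right hnormE
            positivity
        _ = 2 * (K : ℝ) * (N * ‖ξ - a‖ ^ 2) := by ring
    rw [hEa]
    linarith [hsubineq, hinner]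
  -- pass to the limit
  have httendIn : Tendsto (fun k => (P (φ k)).2) atTop (𝓝[Ioo c d] t₀) := by
    rw [tendsto_nhdsWithin_iff]
    exact ⟨httend₀, Eventually.of_forall fun k => hIδsub (hPS2 (φ k))⟩
  have hxtendU₀ : Tendsto (fun k => (P (φ k)).1) atTop (𝓝[U] z₀) := hxbarz ▸ hxtendU
  have hLtend : Tendsto (fun k =>
      lam * v ((P (φ k)).1) - psihd ((P (φ k)).2) - f ((P (φ k)).1)) atTop
      (𝓝 (lam * v z₀ - psihd t₀ - f z₀)) := by
    apply Tendsto.sub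
    apply Tendsto.sub
    · exact hvtend.const_mul lam
    · have h1 : Tendsto (fun k => ψd ((P (φ k)).2)) atTop (𝓝 (ψd t₀)) :=
        (hψc t₀ ht₀).tendsto.comp httendIn
      have h2 : Tendsto (fun k => 2 * (((P (φ k)).2) - t₀)) atTop (𝓝 (2 * (t₀ - t₀))) :=
        (tendsto_const_nhds.mul (httend₀.sub_const t₀))
      have := h1.add h2
      simpa [hpsihddef] using this
    · exact (hf z₀ hz₀U).tendsto.comp hxtendU₀
  have hRtend : Tendsto (fun k =>
      2 * (K : ℝ) * (((φ k : ℝ) + 1) * ‖(P (φ k)).1 - X ((P (φ k)).2)‖ ^ 2)) atTop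
      (𝓝 0) := by
    have := hpen0.const_mul (2 * (K : ℝ))
    simpa using this
  have hfin : lam * v z₀ - psihd t₀ - f z₀ ≤ 0 :=
    le_of_tendsto_of_tendsto hLtend hRtend hkey
  have hpsihd₀ : psihd t₀ = ψd t₀ := by simp [hpsihddef]
  rw [hpsihd₀] at hfin
  exact hfin

/-- Along a trajectory of the Lipschitz vector field `E`, an upper
semicontinuous viscosity subsolution `v` of `λ v − E·Dv − f = 0` satisfies the
integrated (sub-)dynamic programming inequality
`e^{−λσ} v(X(σ)) ≤ e^{−λτ} v(X(τ)) + ∫_σ^τ e^{−λ t} f(X(t)) dt`. -/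

theorem subsolution_along_trajectory
    (m : ℕ) (U : Set (EuclideanSpace ℝ (Fin m))) (hU : IsOpen U)
    (E : EuclideanSpace ℝ (Fin m) → EuclideanSpace ℝ (Fin m))
    (hE : ∃ K : NNReal, LipschitzOnWith K E U)
    (lam : ℝ) (hlam : 0 ≤ lam)
    (f : EuclideanSpace ℝ (Fin m) → ℝ) (hf : ContinuousOn f U)
    (v : EuclideanSpace ℝ (Fin m) → ℝ) (hv : UpperSemicontinuousOn v U)
    (hvsub : ∀ φ : EuclideanSpace ℝ (Fin m) → ℝ, ContDiff ℝ 1 φ → ∀ z ∈ U,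
      IsLocalMaxOn (fun x => v x - φ x) U z →
      lam * v z - (inner ℝ (E z) (gradient φ z) : ℝ) - f z ≤ 0)
    (c d : ℝ) (hcd : c < d)
    (X : ℝ → EuclideanSpace ℝ (Fin m))
    (hXU : ∀ t ∈ Ioo c d, X t ∈ U)
    (hX : ∀ t ∈ Ioo c d, HasDerivAt X (E (X t)) t)
    (σ τ : ℝ) (h1 : c < σ) (h2 : σ < τ) (h3 : τ < d) :
    Real.exp (-lam * σ) * v (X σ) ≤
      Real.exp (-lam * τ) * v (X τ) + ∫ t in σ..τ, Real.exp (-lam * t) * f (X t) := by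
  have hσ : σ ∈ Ioo c d := ⟨h1, h2.trans h3⟩
  have hτ : τ ∈ Ioo c d := ⟨h1.trans h2, h3⟩
  set g : ℝ → ℝ := fun t => Real.exp (-lam * t) * f (X t) with hg
  have hXconts : ContinuousOn X (Ioo c d) := fun t ht =>
    ((hX t ht).continuousAt).continuousWithinAt
  have hexpc : ∀ b : ℝ, Continuous fun t : ℝ => Real.exp (b * t) :=
    fun b => Real.continuous_exp.comp (continuous_const.mul continuous_id)
  have hgcont : ContinuousOn g (Ioo c d) := by
    apply ContinuousOn.mul ((hexpc (-lam)).continuousOn)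
    exact hf.comp hXconts (fun t ht => hXU t ht)
  set G : ℝ → ℝ := fun t => ∫ s in τ..t, g s with hG
  have hGderiv : ∀ t ∈ Ioo c d, HasDerivAt G (g t) t := by
    intro t ht
    apply intervalIntegral.integral_hasDerivAt_right
    · apply ContinuousOn.intervalIntegrable
      apply hgcont.mono
      intro s hs
      rw [mem_uIcc] at hs
      rcases hs with hs | hs
      · exact ⟨lt_of_lt_of_le hτ.1 hs.1, lt_of_le_of_lt hs.2 ht.2⟩
      · exact ⟨lt_of_lt_of_le ht.1 hs.1, lt_of_le_of_lt hs.2 hτ.2⟩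
    · exact hgcont.stronglyMeasurableAtFilter isOpen_Ioo t ht
    · exact (hgcont t ht).continuousAt (isOpen_Ioo.mem_nhds ht)
  have hGcont : ContinuousOn G (Ioo c d) := fun t ht =>
    (hGderiv t ht).continuousAt.continuousWithinAt
  set w : ℝ → ℝ := fun t => Real.exp (-lam * t) * v (X t) + G t with hw
  have hwusc : UpperSemicontinuousOn w (Ioo c d) := by
    have h1' : UpperSemicontinuousOn (fun t => v (X t)) (Ioo c d) :=
      usc_comp_cont hv hXconts hXU
    have h2' := usc_mul_pos h1' ((hexpc (-lam)).continuousOn)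
      (fun t _ => Real.exp_pos _)
    have h3' := usc_add_cont h2' hGcont
    simpa [hw] using h3'
  have hee : ∀ t : ℝ, Real.exp (lam * t) * Real.exp (-lam * t) = 1 := by
    intro t
    rw [← Real.exp_add, show lam * t + -lam * t = 0 by ring, Real.exp_zero]
  have hwsub : ∀ χ χd : ℝ → ℝ, (∀ t ∈ Ioo c d, HasDerivAt χ (χd t) t) →
      ContinuousOn χd (Ioo c d) → ∀ t₁ ∈ Ioo c d,
      IsLocalMaxOn (fun t => w t - χ t) (Ioo c d) t₁ → 0 ≤ χd t₁ := by
    intro χ χd hχ hχc t₁ ht₁ hmax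
    have hχcont : ContinuousOn χ (Ioo c d) := fun t ht =>
      (hχ t ht).continuousAt.continuousWithinAt
    set κ : ℝ := w t₁ - χ t₁ with hκ
    set ψ : ℝ → ℝ := fun t => Real.exp (lam * t) * (χ t + κ - G t) with hψdef
    set ψd : ℝ → ℝ := fun t => lam * Real.exp (lam * t) * (χ t + κ - G t) +
      Real.exp (lam * t) * (χd t - g t) with hψddef
    have hψder : ∀ t ∈ Ioo c d, HasDerivAt ψ (ψd t) t := by
      intro t ht
      have he : HasDerivAt (fun t : ℝ => Real.exp (lam * t))
          (lam * Real.exp (lam * t)) t := by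
        have := (Real.hasDerivAt_exp (lam * t)).comp t ((hasDerivAt_id t).const_mul lam)
        exact this.congr_deriv (by simp only [id_eq, mul_one]; ring)
      have hs : HasDerivAt (fun t => χ t + κ - G t) (χd t - g t) t :=
        ((hχ t ht).add_const κ).sub (hGderiv t ht)
      exact he.mul hs
    have hψdc : ContinuousOn ψd (Ioo c d) := by
      apply ContinuousOn.add
      · exact (continuousOn_const.mul ((hexpc lam).continuousOn)).mul
          (((hχcont.add continuousOn_const)).sub hGcont)
      · exact ((hexpc lam).continuousOn).mul (hχc.sub hgcont)
    have hid : ∀ t, v (X t) - ψ t = Real.exp (lam * t) * (w t - χ t - κ) := by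
      intro t
      have h := hee t
      simp only [hψdef, hw]
      linear_combination (-(v (X t))) * h
    have hmax' : IsLocalMaxOn (fun t => v (X t) - ψ t) (Ioo c d) t₁ := by
      have hm : ∀ᶠ s in 𝓝[Ioo c d] t₁, w s - χ s ≤ w t₁ - χ t₁ := hmax
      filter_upwards [hm] with s hs
      show v (X s) - ψ s ≤ v (X t₁) - ψ t₁
      rw [hid, hid]
      have h1' : w s - χ s - κ ≤ 0 := by rw [hκ]; linarith
      have h2' : w t₁ - χ t₁ - κ = 0 := by rw [hκ]; ring
      rw [h2', mul_zero]
      exact mul_nonpos_of_nonneg_of_nonpos (Real.exp_pos _).le h1'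
    have hts := time_subsolution m U hU E hE lam f hf v hv hvsub c d X hXU hX
      ψ ψd hψder hψdc t₁ ht₁ hmax'
    -- unpack ψd t₁
    have hv1 : Real.exp (lam * t₁) * (w t₁ - G t₁) = v (X t₁) := by
      have h := hee t₁
      simp only [hw]
      linear_combination (v (X t₁)) * h
    have hg1 : Real.exp (lam * t₁) * g t₁ = f (X t₁) := by
      have h := hee t₁
      simp only [hg]
      linear_combination (f (X t₁)) * h
    have hψdval : ψd t₁ = lam * v (X t₁) + Real.exp (lam * t₁) * χd t₁ - f (X t₁) := by
      simp only [hψddef]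
      have hχκ : χ t₁ + κ = w t₁ := by rw [hκ]; ring
      rw [hχκ]
      linear_combination lam * hv1 - hg1
    rw [hψdval] at hts
    have hexp : 0 < Real.exp (lam * t₁) := Real.exp_pos _
    have h9 : 0 ≤ Real.exp (lam * t₁) * χd t₁ := by linarith
    by_contra hc
    push_neg at hc
    nlinarith [mul_pos hexp (neg_pos.2 hc)]
  have hmono := visc_mono hwusc hwsub h1 h2 h3
  have hwσ : w σ = Real.exp (-lam * σ) * v (X σ) - ∫ t in σ..τ, g t := by
    simp only [hw, hG]
    rw [intervalIntegral.integral_symm]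
    ring
  have hwτ : w τ = Real.exp (-lam * τ) * v (X τ) := by
    simp only [hw, hG]
    rw [intervalIntegral.integral_same]
    ring
  rw [hwσ, hwτ] at hmono
  linarith
end
end

section
/- Let m ∈ ℕ, let U be an open subset of ℝ^m, let E : U → ℝ^m be Lipschitz continuous, λ ≥ 0 a constant and f : U → ℝ continuous. Let v : U → ℝ be upper semicontinuous and a viscosity subsolution of λv − E·Dv − f = 0 in U. Let c < d and let X : (c,d) → U be a C¹ curve with X′(t) = E(X(t)) for all t ∈ (c,d). Set w(t) = v(X(t)) and g(t) = f(X(t)) for t ∈ (c,d). Then w is a viscosity subsolution of λw − w′ − g = 0 in (c,d), i.e., for every C¹ function ψ on (c,d) and every t̂ ∈ (c,d) at which w − ψ attains a local maximum, λw(t̂) − ψ′(t̂) − g(t̂) ≤ 0. -/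
open Filter Topology Set Metric

noncomputable section

theorem usc_max_on_compact {α : Type*} [TopologicalSpace α] {K : Set α}
    (hK : IsCompact K) (hne : K.Nonempty) {f : α → ℝ}
    (hf : ∀ x ∈ K, UpperSemicontinuousWithinAt f K x) :
    ∃ x ∈ K, ∀ y ∈ K, f y ≤ f x := by
  by_contra hcon
  push_neg at hcon
  choose y hyK hylt using hcon
  have key : ∀ (x : α) (hx : x ∈ K), ∃ O : Set α, IsOpen O ∧ x ∈ O ∧
      ∀ z ∈ O ∩ K, f z < f (y x hx) := by
    intro x hx
    have h1 := hf x hx (f (y x hx)) (hylt x hx)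
    rw [eventually_iff, mem_nhdsWithin] at h1
    obtain ⟨O, hO, hxO, hsub⟩ := h1
    exact ⟨O, hO, hxO, fun z hz => hsub hz⟩
  choose O hOopen hxO hOlt using key
  obtain ⟨t, ht⟩ := hK.elim_nhds_subcover' O (fun x hx => (hOopen x hx).mem_nhds (hxO x hx))
  have htne : t.Nonempty := by
    obtain ⟨x, hx⟩ := hne
    have := ht hx
    simp only [Set.mem_iUnion] at this
    obtain ⟨i, hi, -⟩ := this
    exact ⟨i, hi⟩
  obtain ⟨i, hit, hmaxi⟩ := t.exists_max_image (fun i => f (y i i.2)) htne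
  have hyK' := hyK (i : α) i.2
  have hmem : y (i : α) i.2 ∈ ⋃ x ∈ t, O (x : α) x.2 := ht hyK'
  simp only [Set.mem_iUnion] at hmem
  obtain ⟨j, hjt, hj⟩ := hmem
  have h1 := hOlt (j : α) j.2 (y (i : α) i.2) ⟨hj, hyK'⟩
  have h2 := hmaxi j hjt
  linarith

theorem hasGradientAt_quad {F : Type*} [NormedAddCommGroup F] [InnerProductSpace ℝ F]
    [CompleteSpace F] (a x : F) (b : ℝ) :
    HasGradientAt (fun y => b * (inner ℝ (y - a) (y - a) : ℝ)) ((2 * b) • (x - a)) x := by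
  have hsub : HasFDerivAt (fun y : F => y - a) (ContinuousLinearMap.id ℝ F) x :=
    (hasFDerivAt_id x).sub_const a
  have hinner := (hsub.inner ℝ hsub).const_mul b
  have key : (b • (fderivInnerCLM ℝ (x - a, x - a)).comp
        ((ContinuousLinearMap.id ℝ F).prod (ContinuousLinearMap.id ℝ F)))
      = InnerProductSpace.toDual ℝ F ((2 * b) • (x - a)) := by
    ext y
    simp [fderivInnerCLM_apply, real_inner_smul_left, real_inner_comm,
      inner_sub_left, inner_sub_right]
    ring
  rw [key] at hinner
  have h2 := hinner.hasGradientAt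
  rwa [(InnerProductSpace.toDual ℝ F).symm_apply_apply] at h2

set_option maxHeartbeats 2000000 in
/-- If `v` is an upper semicontinuous viscosity subsolution of
`λ v − E·Dv − f = 0` in the open set `U ⊂ ℝ^m` and `X : (c,d) → U` is a C¹ solution of
`X′ = E(X)`, then `w(t) = v(X(t))` is a viscosity subsolution of `λ w − w′ − g = 0` in
`(c,d)`, where `g(t) = f(X(t))`. -/
theorem composition_is_subsolution
    (m : ℕ) (U : Set (EuclideanSpace ℝ (Fin m))) (hU : IsOpen U)
    (E : EuclideanSpace ℝ (Fin m) → EuclideanSpace ℝ (Fin m))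
    (hE : ∃ K : NNReal, LipschitzOnWith K E U)
    (lam : ℝ) (hlam : 0 ≤ lam)
    (f : EuclideanSpace ℝ (Fin m) → ℝ) (hf : ContinuousOn f U)
    (v : EuclideanSpace ℝ (Fin m) → ℝ) (hv : UpperSemicontinuousOn v U)
    (hvsub : ∀ φ : EuclideanSpace ℝ (Fin m) → ℝ, ContDiff ℝ 1 φ → ∀ z ∈ U,
      IsLocalMaxOn (fun x => v x - φ x) U z →
      lam * v z - (inner ℝ (E z) (gradient φ z) : ℝ) - f z ≤ 0)
    (c d : ℝ) (hcd : c < d)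
    (X : ℝ → EuclideanSpace ℝ (Fin m))
    (hXU : ∀ t ∈ Ioo c d, X t ∈ U)
    (hX : ∀ t ∈ Ioo c d, HasDerivAt X (E (X t)) t) :
    ∀ ψ : ℝ → ℝ, ContDiff ℝ 1 ψ → ∀ t₀ ∈ Ioo c d,
      IsLocalMaxOn (fun t => v (X t) - ψ t) (Ioo c d) t₀ →
      lam * v (X t₀) - deriv ψ t₀ - f (X t₀) ≤ 0 := by
  obtain ⟨K₀, hK₀⟩ := hE
  intro ψ hψ t₀ ht₀ hmax
  set z := X t₀ with hz
  have hzU : z ∈ U := hXU t₀ ht₀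
  set M : ℝ := v z - ψ t₀ with hM
  -- a closed ball around z inside U
  obtain ⟨r₁, hr₁pos, hr₁⟩ := Metric.isOpen_iff.1 hU z hzU
  set r := r₁ / 2 with hrdef
  have hrpos : 0 < r := by positivity
  have hcb : closedBall z r ⊆ U := (closedBall_subset_ball (by simp [hrdef]; linarith)).trans hr₁
  -- a time interval around t₀
  have hmax' : ∀ᶠ t in 𝓝 t₀, v (X t) - ψ t ≤ M := by
    have h := hmax
    rwa [IsLocalMaxOn, IsMaxFilter, isOpen_Ioo.nhdsWithin_eq ht₀] at h
  obtain ⟨δ₁, hδ₁pos, hδ₁⟩ := Metric.eventually_nhds_iff.1 hmax'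
  obtain ⟨δ₂, hδ₂pos, hδ₂⟩ := Metric.isOpen_iff.1 isOpen_Ioo t₀ ht₀
  set δ := min (δ₁ / 2) (δ₂ / 2) with hδdef
  have hδpos : 0 < δ := by positivity
  set I := Icc (t₀ - δ) (t₀ + δ) with hI
  have hdistI : ∀ t ∈ I, dist t t₀ ≤ δ := by
    intro t htI
    rw [Real.dist_eq, abs_le]
    exact ⟨by linarith [htI.1], by linarith [htI.2]⟩
  have hIsub : I ⊆ Ioo c d := by
    intro t htI
    apply hδ₂
    rw [mem_ball]
    have h1 : δ ≤ δ₂ / 2 := min_le_right _ _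
    have := hdistI t htI
    linarith
  have hImax : ∀ t ∈ I, v (X t) - ψ t ≤ M := by
    intro t htI
    apply hδ₁
    have h1 : δ ≤ δ₁ / 2 := min_le_left _ _
    have := hdistI t htI
    linarith
  have ht₀I : t₀ ∈ I := ⟨by linarith, by linarith⟩
  -- compact set
  set Kc : Set (EuclideanSpace ℝ (Fin m) × ℝ) := closedBall z r ×ˢ I with hKc
  have hKcomp : IsCompact Kc := (isCompact_closedBall z r).prod isCompact_Icc
  have hzK : (z, t₀) ∈ Kc := Set.mem_prod.2 ⟨mem_closedBall_self hrpos.le, ht₀I⟩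
  have hK1 : ∀ p : EuclideanSpace ℝ (Fin m) × ℝ, p ∈ Kc → p.1 ∈ closedBall z r :=
    fun p hp => (Set.mem_prod.1 hp).1
  have hK2 : ∀ p : EuclideanSpace ℝ (Fin m) × ℝ, p ∈ Kc → p.2 ∈ I :=
    fun p hp => (Set.mem_prod.1 hp).2
  -- upper bound for v and lower bound for ψ
  obtain ⟨xB, hxB, hB⟩ := usc_max_on_compact (isCompact_closedBall z r)
    ⟨z, mem_closedBall_self hrpos.le⟩
    (fun x hx => (hv x (hcb hx)).mono hcb)
  obtain ⟨tm, htm, hψm⟩ := isCompact_Icc.exists_isMinOn ⟨t₀, ht₀I⟩ hψ.continuous.continuousOn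
  have hψm' : ∀ t ∈ I, ψ tm ≤ ψ t := fun t htI => isMinOn_iff.1 hψm t htI
  set A₀ : ℝ := v xB - ψ tm - M with hA₀
  set N : ℕ → ℝ := fun n => (n : ℝ) + 1 with hNdef
  have hNpos : ∀ n, 0 < N n := fun n => by positivity
  have hXcont : ∀ t ∈ Ioo c d, ContinuousAt X t := fun t ht => (hX t ht).continuousAt
  -- maximizers
  have hex : ∀ n : ℕ, ∃ p ∈ Kc, ∀ q ∈ Kc,
      v q.1 + (-(ψ q.2) - N n * (inner ℝ (q.1 - X q.2) (q.1 - X q.2) : ℝ) - (q.2 - t₀) ^ 2)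
      ≤ v p.1 + (-(ψ p.2) - N n * (inner ℝ (p.1 - X p.2) (p.1 - X p.2) : ℝ) - (p.2 - t₀) ^ 2) := by
    intro n
    apply usc_max_on_compact hKcomp ⟨(z, t₀), hzK⟩
    intro p hp
    have h1 : UpperSemicontinuousWithinAt (fun q : EuclideanSpace ℝ (Fin m) × ℝ => v q.1) Kc p := by
      intro y hy
      have hvp := hv p.1 (hcb (hK1 p hp)) y hy
      have htend : Tendsto (fun q : EuclideanSpace ℝ (Fin m) × ℝ => q.1) (𝓝[Kc] p) (𝓝[U] p.1) := by
        rw [tendsto_nhdsWithin_iff]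
        refine ⟨continuous_fst.continuousAt.tendsto.mono_left nhdsWithin_le_nhds, ?_⟩
        filter_upwards [self_mem_nhdsWithin] with q hq using hcb (hK1 q hq)
      exact htend.eventually hvp
    have h2 : ContinuousWithinAt (fun q : EuclideanSpace ℝ (Fin m) × ℝ =>
        -(ψ q.2) - N n * (inner ℝ (q.1 - X q.2) (q.1 - X q.2) : ℝ) - (q.2 - t₀) ^ 2) Kc p := by
      have hXp : ContinuousAt X p.2 := hXcont p.2 (hIsub (hK2 p hp))
      have hu : ContinuousAt (fun q : EuclideanSpace ℝ (Fin m) × ℝ => q.1 - X q.2) p :=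
        continuous_fst.continuousAt.sub (hXp.comp continuous_snd.continuousAt)
      have hinner : ContinuousAt (fun q : EuclideanSpace ℝ (Fin m) × ℝ =>
          (inner ℝ (q.1 - X q.2) (q.1 - X q.2) : ℝ)) p := hu.inner hu
      exact (((hψ.continuous.comp continuous_snd).continuousAt.neg.sub
        (hinner.const_mul (N n))).sub
        (((continuous_snd.sub continuous_const).pow 2).continuousAt)).continuousWithinAt
    exact h1.add h2.upperSemicontinuousWithinAt
  choose p hpK hpmax using hex
  have hp1 : ∀ n, (p n).1 ∈ closedBall z r := fun n => hK1 _ (hpK n)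
  have hp2 : ∀ n, (p n).2 ∈ I := fun n => hK2 _ (hpK n)
  have hp1U : ∀ n, (p n).1 ∈ U := fun n => hcb (hp1 n)
  have hp2Ioo : ∀ n, (p n).2 ∈ Ioo c d := fun n => hIsub (hp2 n)
  set Q : ℕ → ℝ := fun n => (inner ℝ ((p n).1 - X (p n).2) ((p n).1 - X (p n).2) : ℝ) with hQdef
  have hQnn : ∀ n, 0 ≤ Q n := fun n => real_inner_self_nonneg
  have hlower : ∀ n, M ≤ v (p n).1 - ψ (p n).2 - N n * Q n - ((p n).2 - t₀) ^ 2 := by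
    intro n
    have h := hpmax n (z, t₀) hzK
    simp only [← hz, sub_self, inner_zero_left] at h
    simp only [hQdef]
    linarith
  have hNQle : ∀ n, N n * Q n ≤ A₀ := by
    intro n
    have h1 := hlower n
    have h2 := hB (p n).1 (hp1 n)
    have h3 := hψm' (p n).2 (hp2 n)
    have h4 := sq_nonneg ((p n).2 - t₀)
    simp only [hA₀]
    linarith
  have hQle : ∀ n, Q n ≤ A₀ / N n := by
    intro n
    rw [le_div_iff₀ (hNpos n), mul_comm]
    exact hNQle n
  -- subsequence
  obtain ⟨pl, hplK, κ, hκmono, hκtend⟩ := hKcomp.tendsto_subseq hpK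
  have hxtend : Tendsto (fun n => (p (κ n)).1) atTop (𝓝 pl.1) :=
    (continuous_fst.tendsto pl).comp hκtend
  have httend : Tendsto (fun n => (p (κ n)).2) atTop (𝓝 pl.2) :=
    (continuous_snd.tendsto pl).comp hκtend
  have hplcb : pl.1 ∈ closedBall z r := hK1 _ hplK
  have hplI : pl.2 ∈ I := hK2 _ hplK
  have hplIoo : pl.2 ∈ Ioo c d := hIsub hplI
  have hNκ : Tendsto (fun n => N (κ n)) atTop atTop :=
    (tendsto_atTop_add_const_right _ 1 tendsto_natCast_atTop_atTop).comp hκmono.tendsto_atTop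
  have hQ0 : Tendsto (fun n => Q (κ n)) atTop (𝓝 0) := by
    apply tendsto_of_tendsto_of_tendsto_of_le_of_le tendsto_const_nhds
      (tendsto_const_nhds.div_atTop hNκ) (fun n => hQnn (κ n)) (fun n => hQle (κ n))
  -- pl.1 = X pl.2
  have hXpl : ContinuousAt X pl.2 := hXcont pl.2 hplIoo
  have hutend : Tendsto (fun n => (p (κ n)).1 - X (p (κ n)).2) atTop (𝓝 (pl.1 - X pl.2)) :=
    hxtend.sub (hXpl.tendsto.comp httend)
  have hQtend : Tendsto (fun n => Q (κ n)) atTop (𝓝 ((inner ℝ (pl.1 - X pl.2) (pl.1 - X pl.2) : ℝ))) :=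
    hutend.inner hutend
  have hxbX : pl.1 = X pl.2 := by
    have h0 : (inner ℝ (pl.1 - X pl.2) (pl.1 - X pl.2) : ℝ) = 0 := tendsto_nhds_unique hQtend hQ0
    have h1 := inner_self_eq_zero.1 h0
    exact sub_eq_zero.1 h1
  -- upper semicontinuity along the subsequence
  have hxtendU : Tendsto (fun n => (p (κ n)).1) atTop (𝓝[U] pl.1) :=
    tendsto_nhdsWithin_iff.2 ⟨hxtend, Eventually.of_forall (fun n => hp1U (κ n))⟩
  have husc : ∀ y, v pl.1 < y → ∀ᶠ n in atTop, v (p (κ n)).1 < y :=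
    fun y hy => hxtendU.eventually (hv pl.1 (hcb hplcb) y hy)
  have hlow2 : ∀ n, ψ (p n).2 + ((p n).2 - t₀) ^ 2 + M ≤ v (p n).1 := by
    intro n
    have h1 := hlower n
    have h2 := mul_nonneg (hNpos n).le (hQnn n)
    linarith
  have hLHStends : Tendsto (fun n => ψ (p (κ n)).2 + ((p (κ n)).2 - t₀) ^ 2 + M) atTop
      (𝓝 (ψ pl.2 + (pl.2 - t₀) ^ 2 + M)) :=
    (((hψ.continuous.tendsto pl.2).comp httend).add
      ((httend.sub_const t₀).pow 2)).add_const M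
  have hkey : ψ pl.2 + (pl.2 - t₀) ^ 2 + M ≤ v pl.1 := by
    by_contra hcon
    push_neg at hcon
    set y := (v pl.1 + (ψ pl.2 + (pl.2 - t₀) ^ 2 + M)) / 2 with hy
    have hy1 : v pl.1 < y := by rw [hy]; linarith
    have hev : ∀ᶠ n in atTop, ψ (p (κ n)).2 + ((p (κ n)).2 - t₀) ^ 2 + M ≤ y := by
      filter_upwards [husc y hy1] with n hn using le_trans (hlow2 (κ n)) hn.le
    have := le_of_tendsto hLHStends hev
    rw [hy] at this
    linarith
  have htb : pl.2 = t₀ := by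
    have h2 := hImax pl.2 hplI
    rw [← hxbX] at h2
    have h3 : (pl.2 - t₀) ^ 2 ≤ 0 := by linarith
    have h4 : (pl.2 - t₀) ^ 2 = 0 := le_antisymm h3 (sq_nonneg _)
    have h5 := pow_eq_zero_iff (two_ne_zero) |>.1 h4
    linarith [sub_eq_zero.1 h5 |>.le, sub_eq_zero.1 h5 |>.ge]
  have hxbz : pl.1 = z := by rw [hxbX, htb]
  rw [htb] at httend hLHStends
  rw [hxbz] at hxtend hxtendU husc
  -- v (p (κ n)).1 → v z
  have hψts : Tendsto (fun n => ψ (p (κ n)).2) atTop (𝓝 (ψ t₀)) :=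
    (hψ.continuous.tendsto t₀).comp httend
  have hL : Tendsto (fun n => ψ (p (κ n)).2 + ((p (κ n)).2 - t₀) ^ 2 + M) atTop (𝓝 (v z)) := by
    have heq : ψ t₀ + (t₀ - t₀) ^ 2 + M = v z := by rw [hM]; ring
    rwa [heq] at hLHStends
  have hvt : Tendsto (fun n => v (p (κ n)).1) atTop (𝓝 (v z)) := by
    apply tendsto_order.2
    constructor
    · intro a ha
      filter_upwards [hL.eventually (eventually_gt_nhds ha)] with n hn
      exact lt_of_lt_of_le hn (hlow2 (κ n))
    · intro a ha
      exact husc a ha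
  have hNQ0 : Tendsto (fun n => N (κ n) * Q (κ n)) atTop (𝓝 0) := by
    have hub : Tendsto (fun n => v (p (κ n)).1 - ψ (p (κ n)).2 - ((p (κ n)).2 - t₀) ^ 2 - M)
        atTop (𝓝 0) := by
      have h1 := (hvt.sub hψts).sub ((httend.sub_const t₀).pow 2) |>.sub_const M
      have heq : v z - ψ t₀ - (t₀ - t₀) ^ 2 - M = 0 := by rw [hM]; ring
      rwa [heq] at h1
    apply tendsto_of_tendsto_of_tendsto_of_le_of_le tendsto_const_nhds hub
      (fun n => mul_nonneg (hNpos (κ n)).le (hQnn (κ n)))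
      (fun n => by have := hlower (κ n); linarith)
  -- the main eventual inequality
  have hmainev : ∀ᶠ n in atTop,
      lam * v (p (κ n)).1 - deriv ψ (p (κ n)).2 - f (p (κ n)).1 ≤
        2 * ((p (κ n)).2 - t₀) + 2 * (K₀ : ℝ) * (N (κ n) * Q (κ n)) := by
    have hxball : ∀ᶠ n in atTop, (p (κ n)).1 ∈ ball z r :=
      hxtend.eventually (isOpen_ball.eventually_mem (mem_ball_self hrpos))
    have htIooδ : ∀ᶠ n in atTop, (p (κ n)).2 ∈ Ioo (t₀ - δ) (t₀ + δ) :=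
      httend.eventually (isOpen_Ioo.eventually_mem ⟨by linarith, by linarith⟩)
    filter_upwards [hxball, htIooδ] with n hxb htio
    set k := κ n with hk
    have htkI : (p k).2 ∈ I := hp2 k
    have htkIoo : (p k).2 ∈ Ioo c d := hp2Ioo k
    have hakU : X (p k).2 ∈ U := hXU _ htkIoo
    have hxkU : (p k).1 ∈ U := hp1U k
    -- Step A: viscosity inequality
    have hφ : ContDiff ℝ 1 (fun x : EuclideanSpace ℝ (Fin m) =>
        N k * (inner ℝ (x - X (p k).2) (x - X (p k).2) : ℝ)) :=
      contDiff_const.mul ((contDiff_id.sub contDiff_const).inner ℝ (contDiff_id.sub contDiff_const))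
    have hgrad := (hasGradientAt_quad (X (p k).2) (p k).1 (N k)).gradient
    have hlocmax : IsLocalMaxOn (fun x => v x -
        N k * (inner ℝ (x - X (p k).2) (x - X (p k).2) : ℝ)) U (p k).1 := by
      have hball : ball z r ∈ 𝓝[U] (p k).1 :=
        mem_nhdsWithin_of_mem_nhds (isOpen_ball.mem_nhds hxb)
      filter_upwards [hball] with x hxball'
      have h := hpmax k (x, (p k).2) (Set.mem_prod.2 ⟨ball_subset_closedBall hxball', htkI⟩)
      linarith
    have hvis := hvsub _ hφ (p k).1 hxkU hlocmax
    rw [hgrad] at hvis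
    -- Step B: derivative in t vanishes
    have hψd : HasDerivAt ψ (deriv ψ (p k).2) (p k).2 :=
      (hψ.differentiable one_ne_zero).differentiableAt.hasDerivAt
    have hXd : HasDerivAt X (E (X (p k).2)) (p k).2 := hX _ htkIoo
    have hud : HasDerivAt (fun t => (p k).1 - X t) (-(E (X (p k).2))) (p k).2 := hXd.const_sub _
    have hinner : HasDerivAt (fun t => (inner ℝ ((p k).1 - X t) ((p k).1 - X t) : ℝ))
        ((inner ℝ ((p k).1 - X (p k).2) (-(E (X (p k).2))) : ℝ) +
         (inner ℝ (-(E (X (p k).2))) ((p k).1 - X (p k).2) : ℝ)) (p k).2 := hud.inner ℝ hud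
    have hpen : HasDerivAt (fun t : ℝ => (t - t₀) ^ 2) (2 * ((p k).2 - t₀)) (p k).2 := by
      have h := ((hasDerivAt_id ((p k).2)).sub_const t₀).fun_pow 2
      simpa using h
    have hh : HasDerivAt (fun t => v (p k).1 - ψ t -
        N k * (inner ℝ ((p k).1 - X t) ((p k).1 - X t) : ℝ) - (t - t₀) ^ 2)
        (0 - deriv ψ (p k).2 - N k * ((inner ℝ ((p k).1 - X (p k).2) (-(E (X (p k).2))) : ℝ) +
          (inner ℝ (-(E (X (p k).2))) ((p k).1 - X (p k).2) : ℝ)) - 2 * ((p k).2 - t₀)) (p k).2 :=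
      (((hasDerivAt_const _ (v (p k).1)).sub hψd).sub (hinner.const_mul (N k))).sub hpen
    have hlocmax2 : IsLocalMax (fun t => v (p k).1 - ψ t -
        N k * (inner ℝ ((p k).1 - X t) ((p k).1 - X t) : ℝ) - (t - t₀) ^ 2) (p k).2 := by
      have hIcc : I ∈ 𝓝 (p k).2 := by rw [hI]; exact Icc_mem_nhds htio.1 htio.2
      filter_upwards [hIcc] with t htI2
      have h := hpmax k ((p k).1, t) (Set.mem_prod.2 ⟨hp1 k, htI2⟩)
      linarith
    have hzero := hlocmax2.hasDerivAt_eq_zero hh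
    have hneg1 : (inner ℝ ((p k).1 - X (p k).2) (-(E (X (p k).2))) : ℝ) =
        -(inner ℝ ((p k).1 - X (p k).2) (E (X (p k).2)) : ℝ) := inner_neg_right _ _
    have hneg2 : (inner ℝ (-(E (X (p k).2))) ((p k).1 - X (p k).2) : ℝ) =
        -(inner ℝ ((p k).1 - X (p k).2) (E (X (p k).2)) : ℝ) := by
      rw [inner_neg_left, real_inner_comm]
    have e1 : 2 * N k * (inner ℝ ((p k).1 - X (p k).2) (E (X (p k).2)) : ℝ) =
        deriv ψ (p k).2 + 2 * ((p k).2 - t₀) := by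
      rw [hneg1, hneg2] at hzero
      linarith [hzero]
    -- Step C: combine
    have hsmul : (inner ℝ (E (p k).1) ((2 * N k) • ((p k).1 - X (p k).2)) : ℝ) =
        2 * N k * (inner ℝ (E (p k).1) ((p k).1 - X (p k).2) : ℝ) := real_inner_smul_right _ _ _
    rw [hsmul] at hvis
    have hlip : dist (E (p k).1) (E (X (p k).2)) ≤ (K₀ : ℝ) * dist (p k).1 (X (p k).2) :=
      hK₀.dist_le_mul _ hxkU _ hakU
    rw [dist_eq_norm, dist_eq_norm] at hlip
    have hcs : (inner ℝ (E (p k).1 - E (X (p k).2)) ((p k).1 - X (p k).2) : ℝ) ≤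
        ‖E (p k).1 - E (X (p k).2)‖ * ‖(p k).1 - X (p k).2‖ := real_inner_le_norm _ _
    have hnormQ : ‖(p k).1 - X (p k).2‖ * ‖(p k).1 - X (p k).2‖ = Q k := by
      rw [hQdef]; exact (real_inner_self_eq_norm_mul_norm _).symm
    have h1 : (inner ℝ (E (p k).1 - E (X (p k).2)) ((p k).1 - X (p k).2) : ℝ) ≤ (K₀ : ℝ) * Q k := by
      calc (inner ℝ (E (p k).1 - E (X (p k).2)) ((p k).1 - X (p k).2) : ℝ)
          ≤ ‖E (p k).1 - E (X (p k).2)‖ * ‖(p k).1 - X (p k).2‖ := hcs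
        _ ≤ ((K₀ : ℝ) * ‖(p k).1 - X (p k).2‖) * ‖(p k).1 - X (p k).2‖ :=
            mul_le_mul_of_nonneg_right hlip (norm_nonneg _)
        _ = (K₀ : ℝ) * Q k := by rw [mul_assoc, hnormQ]
    have hcomm : (inner ℝ (E (X (p k).2)) ((p k).1 - X (p k).2) : ℝ) =
        (inner ℝ ((p k).1 - X (p k).2) (E (X (p k).2)) : ℝ) := real_inner_comm _ _
    have hsplit : (inner ℝ (E (p k).1) ((p k).1 - X (p k).2) : ℝ) =
        (inner ℝ (E (X (p k).2)) ((p k).1 - X (p k).2) : ℝ) +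
        (inner ℝ (E (p k).1 - E (X (p k).2)) ((p k).1 - X (p k).2) : ℝ) := by
      rw [inner_sub_left]; ring
    have h3 : 2 * N k * (inner ℝ (E (p k).1) ((p k).1 - X (p k).2) : ℝ) =
        2 * N k * (inner ℝ ((p k).1 - X (p k).2) (E (X (p k).2)) : ℝ) +
        2 * N k * (inner ℝ (E (p k).1 - E (X (p k).2)) ((p k).1 - X (p k).2) : ℝ) := by
      rw [hsplit, hcomm]; ring
    have h2 : 2 * N k * (inner ℝ (E (p k).1 - E (X (p k).2)) ((p k).1 - X (p k).2) : ℝ) ≤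
        2 * N k * ((K₀ : ℝ) * Q k) :=
      mul_le_mul_of_nonneg_left h1 (by positivity)
    have h4 : 2 * N k * ((K₀ : ℝ) * Q k) = 2 * (K₀ : ℝ) * (N k * Q k) := by ring
    linarith
  -- pass to the limit
  have hderivt : Tendsto (fun n => deriv ψ (p (κ n)).2) atTop (𝓝 (deriv ψ t₀)) :=
    ((hψ.continuous_deriv le_rfl).tendsto t₀).comp httend
  have hft : Tendsto (fun n => f (p (κ n)).1) atTop (𝓝 (f z)) :=
    (hf z hzU).tendsto.comp hxtendU
  have hLHS : Tendsto (fun n => lam * v (p (κ n)).1 - deriv ψ (p (κ n)).2 - f (p (κ n)).1)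
      atTop (𝓝 (lam * v z - deriv ψ t₀ - f z)) :=
    ((hvt.const_mul lam).sub hderivt).sub hft
  have hRHS : Tendsto (fun n => 2 * ((p (κ n)).2 - t₀) + 2 * (K₀ : ℝ) * (N (κ n) * Q (κ n)))
      atTop (𝓝 (2 * (t₀ - t₀) + 2 * (K₀ : ℝ) * 0)) :=
    (((httend.sub_const t₀).const_mul 2)).add (hNQ0.const_mul _)
  have hfinal := le_of_tendsto_of_tendsto hLHS hRHS hmainev
  simpa using hfinal
end
end

section
/- Let H : ℝ² → ℝ be of class C² with H(0) = 0 and DH(0) = 0. Suppose there exist constants m ≥ 0, n > 0 with n < m + 2, constants A₁, A₂ > 0, and R > 0 such that for all x ∈ B_R(0): |∂²H/∂x_i∂x_j (x)| ≤ A₁ |x|^m for i, j ∈ {1,2}, and |DH(x)| ≥ A₂ |x|^n. Let Ω ⊂ ℝ² be open and bounded with 0 ∈ Ω and DH(x) ≠ 0 for every x ∈ cl(Ω) \ {0}. Then there exists a constant A₀ > 0 such that |DH(x)| ≥ A₀ |H(x)|^{n/(m+2)} for all x ∈ cl(Ω). -/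
open Filter Topology Set Metric Bornology

noncomputable section

lemma E2.abs_apply_le_norm (u : E2) (i : Fin 2) : |u i| ≤ ‖u‖ := by
  have h := abs_real_inner_le_norm (EuclideanSpace.single i (1:ℝ)) u
  rw [EuclideanSpace.inner_single_left] at h
  simpa [EuclideanSpace.norm_single] using h

lemma E2.eq_sum_single (u : E2) : u = ∑ i, u i • EuclideanSpace.single i (1:ℝ) := by
  ext j
  simp [Fin.sum_univ_two, EuclideanSpace.single_apply]
  fin_cases j <;> simp

lemma bilin_norm_le (B : E2 →L[ℝ] E2 →L[ℝ] ℝ) {c : ℝ} (hc : 0 ≤ c)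
    (h : ∀ i j : Fin 2, |B (EuclideanSpace.single i 1) (EuclideanSpace.single j 1)| ≤ c) :
    ‖B‖ ≤ 4 * c := by
  apply ContinuousLinearMap.opNorm_le_bound _ (by positivity)
  intro u
  apply ContinuousLinearMap.opNorm_le_bound _ (by positivity)
  intro v
  have expand : B u v = ∑ i : Fin 2, ∑ j : Fin 2,
      (u i * v j) * B (EuclideanSpace.single i 1) (EuclideanSpace.single j 1) := by
    conv_lhs => rw [E2.eq_sum_single u, E2.eq_sum_single v]
    simp [map_sum, Finset.mul_sum, mul_assoc]; ring
  rw [expand]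
  have bd : ∀ i j : Fin 2,
      |(u i * v j) * B (EuclideanSpace.single i 1) (EuclideanSpace.single j 1)|
        ≤ ‖u‖ * ‖v‖ * c := by
    intro i j
    rw [abs_mul, abs_mul]
    have h1 := E2.abs_apply_le_norm u i
    have h2 := E2.abs_apply_le_norm v j
    have h3 := h i j
    have := mul_le_mul (mul_le_mul h1 h2 (abs_nonneg _) (norm_nonneg _)) h3 (abs_nonneg _)
      (by positivity)
    linarith
  calc |∑ i : Fin 2, ∑ j : Fin 2, (u i * v j) * B (EuclideanSpace.single i 1) (EuclideanSpace.single j 1)|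
      ≤ ∑ i : Fin 2, ∑ j : Fin 2, ‖u‖ * ‖v‖ * c := by
        refine (Finset.abs_sum_le_sum_abs _ _).trans ?_
        refine Finset.sum_le_sum fun i _ => ?_
        refine (Finset.abs_sum_le_sum_abs _ _).trans ?_
        exact Finset.sum_le_sum fun j _ => bd i j
    _ = 4 * c * ‖u‖ * ‖v‖ := by simp [Fin.sum_univ_two]; ring

/-- Under the degeneracy conditions (H3) at the critical point `0`
(`|H_{x_i x_j}(x)| ≤ A₁|x|^m` and `|DH(x)| ≥ A₂|x|^n` near `0`, with `n < m + 2`),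
and assuming `DH ≠ 0` away from `0` on `cl Ω`, there is a constant `A₀ > 0` with
`|DH(x)| ≥ A₀ |H(x)|^{n/(m+2)}` on `cl Ω`. -/
theorem gradient_lower_bound_by_H
    (H : E2 → ℝ) (hH : ContDiff ℝ 2 H) (hH0 : H 0 = 0) (hDH0 : gradient H 0 = 0)
    (m n A₁ A₂ R : ℝ) (hm : 0 ≤ m) (hn : 0 < n) (hnm : n < m + 2)
    (hA₁ : 0 < A₁) (hA₂ : 0 < A₂) (hR : 0 < R)
    (hHess : ∀ x ∈ ball (0 : E2) R, ∀ i j : Fin 2,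
      |fderiv ℝ (fun y => fderiv ℝ H y (EuclideanSpace.single j 1)) x
        (EuclideanSpace.single i 1)| ≤ A₁ * ‖x‖ ^ m)
    (hgrad : ∀ x ∈ ball (0 : E2) R, A₂ * ‖x‖ ^ n ≤ ‖gradient H x‖)
    (Ω : Set E2) (hΩopen : IsOpen Ω) (hΩbdd : IsBounded Ω) (h0Ω : (0 : E2) ∈ Ω)
    (hcrit : ∀ x ∈ closure Ω, x ≠ 0 → gradient H x ≠ 0) :
    ∃ A₀ : ℝ, 0 < A₀ ∧ ∀ x ∈ closure Ω,
      A₀ * |H x| ^ (n / (m + 2)) ≤ ‖gradient H x‖ := by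
  set α := n / (m + 2) with hα_def
  have hm2 : (0:ℝ) < m + 2 := by linarith
  have hα : 0 < α := div_pos hn hm2
  have hH1 : ContDiff ℝ 1 (fderiv ℝ H) := hH.fderiv_right (m := 1) (by norm_num)
  have hdf : Differentiable ℝ (fderiv ℝ H) := hH1.differentiable (by norm_num)
  have hdH : Differentiable ℝ H := hH.differentiable (by norm_num)
  have fH0 : fderiv ℝ H 0 = 0 := by
    unfold gradient at hDH0
    simpa using (LinearIsometryEquiv.map_eq_zero_iff _).1 hDH0
  have gnorm : ∀ x : E2, ‖gradient H x‖ = ‖fderiv ℝ H x‖ := fun x =>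
    LinearIsometryEquiv.norm_map _ _
  -- Hessian operator norm bound
  have hB : ∀ x ∈ ball (0:E2) R, ‖fderiv ℝ (fderiv ℝ H) x‖ ≤ 4 * (A₁ * ‖x‖ ^ m) := by
    intro x hx
    refine bilin_norm_le _ (by positivity) fun i j => ?_
    have hc : fderiv ℝ (fun y => fderiv ℝ H y (EuclideanSpace.single j 1)) x
        = (fderiv ℝ (fderiv ℝ H) x).flip (EuclideanSpace.single j 1) := by
      rw [fderiv_clm_apply (hdf x) (differentiableAt_const _)]
      simp
    have h1 := hHess x hx i j
    rw [hc] at h1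
    simpa using h1
  -- Step A : first derivative bound
  have stepA : ∀ x : E2, ‖x‖ < R → ‖fderiv ℝ H x‖ ≤ 4 * A₁ * ‖x‖ ^ (m + 1) := by
    intro x hx
    have hsub : closedBall (0:E2) ‖x‖ ⊆ ball 0 R := closedBall_subset_ball hx
    have bound : ∀ y ∈ closedBall (0:E2) ‖x‖,
        ‖fderiv ℝ (fderiv ℝ H) y‖ ≤ 4 * A₁ * ‖x‖ ^ m := by
      intro y hy
      have hy' : ‖y‖ ≤ ‖x‖ := by simpa using mem_closedBall_zero_iff.1 hy
      have h2 := Real.rpow_le_rpow (norm_nonneg y) hy' hm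
      have h3 := hB y (hsub hy)
      nlinarith [Real.rpow_nonneg (norm_nonneg y) m]
    have hmem : x ∈ closedBall (0:E2) ‖x‖ := mem_closedBall_zero_iff.2 le_rfl
    have h0m : (0:E2) ∈ closedBall (0:E2) ‖x‖ := mem_closedBall_self (norm_nonneg x)
    have key := (convex_closedBall (0:E2) ‖x‖).norm_image_sub_le_of_norm_fderiv_le
      (fun y _ => hdf y) bound h0m hmem
    rw [fH0, sub_zero, sub_zero] at key
    calc ‖fderiv ℝ H x‖ ≤ 4 * A₁ * ‖x‖ ^ m * ‖x‖ := key
      _ = 4 * A₁ * ‖x‖ ^ (m + 1) := by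
          rw [Real.rpow_add' (norm_nonneg x) (by linarith), Real.rpow_one]; ring
  -- Step B : bound on |H|
  have stepB : ∀ x : E2, ‖x‖ < R → |H x| ≤ 4 * A₁ * ‖x‖ ^ (m + 2) := by
    intro x hx
    have bound : ∀ y ∈ closedBall (0:E2) ‖x‖,
        ‖fderiv ℝ H y‖ ≤ 4 * A₁ * ‖x‖ ^ (m + 1) := by
      intro y hy
      have hy' : ‖y‖ ≤ ‖x‖ := mem_closedBall_zero_iff.1 hy
      have h2 := Real.rpow_le_rpow (norm_nonneg y) hy' (by linarith : (0:ℝ) ≤ m + 1)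
      have h3 := stepA y (lt_of_le_of_lt hy' hx)
      nlinarith
    have hmem : x ∈ closedBall (0:E2) ‖x‖ := mem_closedBall_zero_iff.2 le_rfl
    have h0m : (0:E2) ∈ closedBall (0:E2) ‖x‖ := mem_closedBall_self (norm_nonneg x)
    have key := (convex_closedBall (0:E2) ‖x‖).norm_image_sub_le_of_norm_fderiv_le
      (fun y _ => hdH y) bound h0m hmem
    rw [hH0, sub_zero, sub_zero] at key
    calc |H x| = ‖H x‖ := rfl
      _ ≤ 4 * A₁ * ‖x‖ ^ (m + 1) * ‖x‖ := key
      _ = 4 * A₁ * ‖x‖ ^ (m + 2) := by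
          have h7 := Real.rpow_add' (y := m + 1) (z := 1) (norm_nonneg x) (by linarith)
          rw [Real.rpow_one] at h7
          rw [show m + (2:ℝ) = m + 1 + 1 by ring, h7]; ring
  -- Step D : near-origin estimate
  set c₁ := A₂ / (4 * A₁) ^ α with hc₁def
  have h4A : (0:ℝ) < 4 * A₁ := by linarith
  have hp : (0:ℝ) < (4 * A₁) ^ α := Real.rpow_pos_of_pos h4A α
  have hc₁ : 0 < c₁ := div_pos hA₂ hp
  have stepD : ∀ x : E2, ‖x‖ < R → c₁ * |H x| ^ α ≤ ‖gradient H x‖ := by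
    intro x hx
    have h1 : |H x| ^ α ≤ (4 * A₁) ^ α * ‖x‖ ^ n := by
      have h2 : |H x| ^ α ≤ (4 * A₁ * ‖x‖ ^ (m + 2)) ^ α :=
        Real.rpow_le_rpow (abs_nonneg _) (stepB x hx) hα.le
      have h3 : (4 * A₁ * ‖x‖ ^ (m + 2)) ^ α = (4 * A₁) ^ α * (‖x‖ ^ (m + 2)) ^ α :=
        Real.mul_rpow h4A.le (Real.rpow_nonneg (norm_nonneg x) _)
      have h4 : (‖x‖ ^ (m + 2)) ^ α = ‖x‖ ^ n := by
        rw [← Real.rpow_mul (norm_nonneg x)]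
        congr 1
        rw [hα_def]
        field_simp
      rw [h3, h4] at h2
      exact h2
    have h5 : c₁ * |H x| ^ α ≤ c₁ * ((4 * A₁) ^ α * ‖x‖ ^ n) :=
      mul_le_mul_of_nonneg_left h1 hc₁.le
    have h6 : c₁ * ((4 * A₁) ^ α * ‖x‖ ^ n) = A₂ * ‖x‖ ^ n := by
      rw [hc₁def]; field_simp
    rw [h6] at h5
    exact h5.trans (hgrad x (mem_ball_zero_iff.2 hx))
  -- compact part
  have gcont : Continuous (gradient H) :=
    ((InnerProductSpace.toDual ℝ E2).symm.continuous).comp hH1.continuous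
  have hKc : IsCompact (closure Ω) := hΩbdd.isCompact_closure
  have hconH : Continuous fun x : E2 => |H x| ^ α :=
    (hH.continuous.abs).rpow_const fun _ => Or.inr hα.le
  obtain ⟨xM, hxM, hM⟩ := hKc.exists_isMaxOn ⟨0, subset_closure h0Ω⟩ hconH.continuousOn
  set M := |H xM| ^ α with hMdef
  have hM0 : 0 ≤ M := Real.rpow_nonneg (abs_nonneg _) α
  by_cases hKne : (closure Ω \ ball (0:E2) R).Nonempty
  · obtain ⟨x₀, hx₀K, hx₀min⟩ :=
      (hKc.diff isOpen_ball).exists_isMinOn hKne gcont.norm.continuousOn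
    have hx₀ne : x₀ ≠ 0 := by
      rintro rfl
      exact hx₀K.2 (mem_ball_self hR)
    have hε : 0 < ‖gradient H x₀‖ := norm_pos_iff.2 (hcrit x₀ hx₀K.1 hx₀ne)
    refine ⟨min c₁ (‖gradient H x₀‖ / (M + 1)), lt_min hc₁ (by positivity), ?_⟩
    intro x hx
    by_cases hxR : ‖x‖ < R
    · calc min c₁ (‖gradient H x₀‖ / (M + 1)) * |H x| ^ α
          ≤ c₁ * |H x| ^ α :=
            mul_le_mul_of_nonneg_right (min_le_left _ _) (Real.rpow_nonneg (abs_nonneg _) _)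
        _ ≤ ‖gradient H x‖ := stepD x hxR
    · have hxK : x ∈ closure Ω \ ball (0:E2) R :=
        ⟨hx, fun hmem => hxR (mem_ball_zero_iff.1 hmem)⟩
      have h1 : |H x| ^ α ≤ M := hM hx
      calc min c₁ (‖gradient H x₀‖ / (M + 1)) * |H x| ^ α
          ≤ (‖gradient H x₀‖ / (M + 1)) * M :=
            mul_le_mul (min_le_right _ _) h1 (Real.rpow_nonneg (abs_nonneg _) _)
              (by positivity)
        _ ≤ ‖gradient H x₀‖ := by
            rw [div_mul_eq_mul_div, div_le_iff₀ (by linarith)]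
            nlinarith
        _ ≤ ‖gradient H x‖ := hx₀min hxK
  · refine ⟨c₁, hc₁, fun x hx => ?_⟩
    have hxR : ‖x‖ < R := by
      by_contra h
      exact hKne ⟨x, hx, fun hmem => h (mem_ball_zero_iff.1 hmem)⟩
    exact stepD x hxR
end
end

section
/- Let H : ℝ² → ℝ be of class C² with H(0) = 0. Let R > 0, A₀ > 0 and α ∈ (0,1), and assume that |DH(x)| ≥ A₀ |H(x)|^α for all x in the closed ball cl(B_R(0)), and that for every s ∈ (0, R) there exists x with |x| ≤ s and H(x) > 0. For r ∈ (0, R) define m_H(r) = max{H(x) : |x| ≤ r}. Then m_H is increasing on (0,R), for all 0 < s < r < R one has m_H(r)^{1−α} − m_H(s)^{1−α} ≥ (1−α) A₀ (r − s), and consequently m_H(r) ≥ A₃ r^ρ for all r ∈ (0, R), where ρ = 1/(1−α) > 1 and A₃ = ((1−α)A₀)^{1/(1−α)}. -/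
set_option maxHeartbeats 1000000

open Filter Topology Set Metric

noncomputable section

/-- `m_H(r) = max { H(x) : |x| ≤ r }`. -/
def mH (H : E2 → ℝ) (r : ℝ) : ℝ := sSup (H '' closedBall (0 : E2) r)

namespace MHaux

variable (H : E2 → ℝ)

lemma mH_bdd (hc : Continuous H) (t : ℝ) : BddAbove (H '' closedBall (0:E2) t) :=
  ((isCompact_closedBall _ t).image hc).bddAbove

lemma mH_ne {t : ℝ} (ht : 0 ≤ t) : (H '' closedBall (0:E2) t).Nonempty :=
  ⟨H 0, mem_image_of_mem _ (mem_closedBall_self ht)⟩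

lemma mH_mono (hc : Continuous H) {s t : ℝ} (h0 : 0 ≤ s) (hst : s ≤ t) :
    mH H s ≤ mH H t :=
  csSup_le_csSup (mH_bdd H hc t) (mH_ne H h0)
    (image_mono (closedBall_subset_closedBall hst))

lemma le_mH (hc : Continuous H) {t : ℝ} {x : E2} (hx : ‖x‖ ≤ t) : H x ≤ mH H t :=
  le_csSup (mH_bdd H hc t) (mem_image_of_mem _ (mem_closedBall_zero_iff.2 hx))

lemma mH_exists_max (hc : Continuous H) {t : ℝ} (ht : 0 ≤ t) :
    ∃ x₀ ∈ closedBall (0:E2) t, mH H t = H x₀ :=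
  (isCompact_closedBall _ t).exists_sSup_image_eq ⟨0, mem_closedBall_self ht⟩ hc.continuousOn

lemma mH_step (hc : Continuous H) {R : ℝ} :
    ∀ ε > 0, ∃ δ > 0, ∀ a b : ℝ, 0 ≤ a → a ≤ b → b ≤ R → b - a < δ →
      mH H b ≤ mH H a + ε := by
  intro ε hε
  have hu := (isCompact_closedBall (0:E2) R).uniformContinuousOn_of_continuous hc.continuousOn
  rw [Metric.uniformContinuousOn_iff] at hu
  obtain ⟨δ, hδ, hδ'⟩ := hu ε hε
  refine ⟨δ, hδ, fun a b ha hab hbR hd => ?_⟩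
  refine csSup_le (mH_ne H (ha.trans hab)) ?_
  rintro _ ⟨x, hx, rfl⟩
  rw [mem_closedBall_zero_iff] at hx
  rcases eq_or_lt_of_le (ha.trans hab) with hb | hb
  · have hba : a = b := le_antisymm hab (by rw [← hb]; exact ha)
    have hx0 : ‖x‖ ≤ a := by rw [hba]; exact hx
    have := le_mH H hc hx0
    linarith
  · set y := (a / b) • x with hy
    have hab' : 0 ≤ a / b := div_nonneg ha hb.le
    have hab1 : a / b ≤ 1 := (div_le_one hb).2 hab
    have hny : ‖y‖ ≤ a := by
      rw [hy, norm_smul, Real.norm_eq_abs, abs_of_nonneg hab']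
      calc a / b * ‖x‖ ≤ a / b * b := by gcongr
        _ = a := div_mul_cancel₀ a hb.ne'
    have hdist : dist x y < δ := by
      rw [hy, dist_eq_norm]
      have hxy : x - (a/b) • x = (1 - a/b) • x := by rw [sub_smul, one_smul]
      rw [hxy, norm_smul, Real.norm_eq_abs, abs_of_nonneg (by linarith)]
      have hle : (1 - a/b) * ‖x‖ ≤ b - a := by
        calc (1 - a/b) * ‖x‖ ≤ (1 - a/b) * b := by gcongr
          _ = b - a := by field_simp
      linarith
    have h1 : dist (H x) (H y) < ε :=
      hδ' x (mem_closedBall_zero_iff.2 (hx.trans hbR)) y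
        (mem_closedBall_zero_iff.2 (hny.trans (hab.trans hbR))) hdist
    have h2 : H y ≤ mH H a := le_mH H hc hny
    rw [Real.dist_eq] at h1
    have := (abs_lt.1 h1).2
    linarith

lemma mH_contOn (hc : Continuous H) {R : ℝ} :
    ContinuousOn (mH H) (Icc 0 R) := by
  intro a ha
  rw [ContinuousWithinAt, Metric.tendsto_nhdsWithin_nhds]
  intro ε hε
  obtain ⟨δ, hδ, hδ'⟩ := mH_step H hc (R := R) (ε/2) (by linarith)
  refine ⟨δ, hδ, fun t ht hd => ?_⟩
  rw [Real.dist_eq] at hd ⊢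
  rcases le_total t a with h | h
  · have hd2 : a - t < δ := by
      have := (abs_lt.1 hd).1; linarith
    have h1 := hδ' t a ht.1 h ha.2 hd2
    have h2 := mH_mono H hc ht.1 h
    rw [abs_of_nonpos (by linarith)]
    linarith
  · have hd2 : t - a < δ := (abs_lt.1 hd).2
    have h1 := hδ' a t ha.1 h ht.2 hd2
    have h2 := mH_mono H hc ha.1 h
    rw [abs_of_nonneg (by linarith)]
    linarith

lemma rpow_concave_bound {p a b : ℝ} (hp0 : 0 < p) (hp1 : p < 1) (ha : 0 < a) (hab : a ≤ b) :
    p * b ^ (p - 1) * (b - a) ≤ b ^ p - a ^ p := by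
  rcases eq_or_lt_of_le hab with rfl | h
  · simp
  have hcont : ContinuousOn (fun x : ℝ => x ^ p) (Icc a b) := fun x hx =>
    (Real.continuousAt_rpow_const x p (Or.inl (lt_of_lt_of_le ha hx.1).ne')).continuousWithinAt
  obtain ⟨c, hc, hderiv⟩ := exists_hasDerivAt_eq_slope (fun x : ℝ => x ^ p)
    (fun x => p * x ^ (p - 1)) h hcont
    (fun x hx => Real.hasDerivAt_rpow_const (Or.inl (ha.trans hx.1).ne'))
  have hcb : b ^ (p - 1) ≤ c ^ (p - 1) :=
    Real.rpow_le_rpow_of_nonpos (ha.trans hc.1) hc.2.le (by linarith)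
  rw [eq_div_iff (by linarith : b - a ≠ 0)] at hderiv
  have hbp : (0:ℝ) ≤ b - a := by linarith
  have hkey := mul_le_mul_of_nonneg_right
    (mul_le_mul_of_nonneg_left hcb hp0.le) hbp
  linarith

end MHaux

open MHaux

/-- If `|DH| ≥ A₀ |H|^α` on `cl B_R(0)` with `α ∈ (0,1)` and `H`
takes positive values arbitrarily close to `0`, then `m_H` is increasing on `(0,R)`,
satisfies `m_H(r)^{1−α} − m_H(s)^{1−α} ≥ (1−α) A₀ (r−s)` for `0 < s < r < R`, and
consequently `m_H(r) ≥ A₃ r^ρ` with `ρ = 1/(1−α)` and `A₃ = ((1−α)A₀)^{1/(1−α)}`. -/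
theorem mH_growth
    (H : E2 → ℝ) (hH : ContDiff ℝ 2 H) (hH0 : H 0 = 0)
    (R A₀ α : ℝ) (hR : 0 < R) (hA₀ : 0 < A₀) (hα0 : 0 < α) (hα1 : α < 1)
    (hgrad : ∀ x ∈ closedBall (0 : E2) R, A₀ * |H x| ^ α ≤ ‖gradient H x‖)
    (hpos : ∀ s ∈ Ioo 0 R, ∃ x : E2, ‖x‖ ≤ s ∧ 0 < H x) :
    StrictMonoOn (mH H) (Ioo 0 R) ∧
    (∀ s r : ℝ, 0 < s → s < r → r < R →
      (1 - α) * A₀ * (r - s) ≤ mH H r ^ (1 - α) - mH H s ^ (1 - α)) ∧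
    (∀ r ∈ Ioo 0 R, ((1 - α) * A₀) ^ (1 / (1 - α)) * r ^ (1 / (1 - α)) ≤ mH H r) := by
  have hc : Continuous H := hH.continuous
  set c := (1 - α) * A₀ with hcdef
  clear_value c
  have hcpos : 0 < c := by rw [hcdef]; exact mul_pos (by linarith) hA₀
  -- positivity of mH on (0, R)
  have hMpos : ∀ t ∈ Ioo (0:ℝ) R, 0 < mH H t := by
    intro t ht
    obtain ⟨x, hx, hHx⟩ := hpos t ht
    exact lt_of_lt_of_le hHx (le_mH H hc hx)
  -- the slope estimate
  have slope_lb : ∀ x : ℝ, 0 < x → x < R → ∀ ε > 0,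
      ∀ᶠ z in 𝓝[>] x, A₀ * mH H x ^ α - ε ≤ slope (mH H) x z := by
    intro x hx0 hxR ε hε
    obtain ⟨x₀, hx₀mem, hmax⟩ := mH_exists_max H hc hx0.le
    rw [mem_closedBall_zero_iff] at hx₀mem
    have hx₀R : x₀ ∈ closedBall (0:E2) R :=
      mem_closedBall_zero_iff.2 (hx₀mem.trans hxR.le)
    have hMx : 0 < mH H x := hMpos x ⟨hx0, hxR⟩
    have hg : A₀ * mH H x ^ α ≤ ‖gradient H x₀‖ := by
      have hthis := hgrad x₀ hx₀R
      rw [← hmax, abs_of_pos hMx] at hthis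
      exact hthis
    set g := gradient H x₀ with hgdef
    have hK : 0 < ‖g‖ :=
      lt_of_lt_of_le (mul_pos hA₀ (Real.rpow_pos_of_pos hMx α)) hg
    set u : E2 := ‖g‖⁻¹ • g with hudef
    have hnu : ‖u‖ = 1 := by
      rw [hudef, norm_smul, norm_inv, norm_norm, inv_mul_cancel₀ hK.ne']
    have hdiff : DifferentiableAt ℝ H x₀ :=
      (hH.differentiable (by norm_num)).differentiableAt
    have hgradAt : HasGradientAt H g x₀ := hdiff.hasGradientAt
    rw [hasGradientAt_iff_isLittleO] at hgradAt
    have hbound := hgradAt.def hε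
    have path : Filter.Tendsto (fun δ : ℝ => x₀ + δ • u) (𝓝[>] 0) (𝓝 x₀) := by
      have hcontp : Continuous fun δ : ℝ => x₀ + δ • u := by continuity
      have h0 : Filter.Tendsto (fun δ : ℝ => x₀ + δ • u) (𝓝 0) (𝓝 (x₀ + (0:ℝ) • u)) :=
        hcontp.tendsto 0
      rw [zero_smul, add_zero] at h0
      exact h0.mono_left nhdsWithin_le_nhds
    have hb2 := path.eventually hbound
    have htr : Filter.Tendsto (fun z : ℝ => z - x) (𝓝[>] x) (𝓝[>] 0) := by
      apply tendsto_nhdsWithin_of_tendsto_nhds_of_eventually_within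
      · have h0 : Filter.Tendsto (fun z : ℝ => z - x) (𝓝 x) (𝓝 (x - x)) :=
          (continuous_id.sub continuous_const).tendsto x
        simpa using h0.mono_left nhdsWithin_le_nhds
      · exact eventually_mem_nhdsWithin.mono fun z hz => mem_Ioi.2 (sub_pos.2 hz)
    have hfinal := htr.eventually hb2
    filter_upwards [hfinal, self_mem_nhdsWithin] with z hz hz'
    rw [mem_Ioi] at hz'
    have hδpos : 0 < z - x := sub_pos.2 hz'
    set δ := z - x with hδdef
    set y : E2 := x₀ + δ • u with hydef
    clear_value δ
    have hinner : (inner ℝ g (y - x₀) : ℝ) = δ * ‖g‖ := by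
      rw [hydef]
      simp only [add_sub_cancel_left]
      rw [real_inner_smul_right, hudef, real_inner_smul_right,
        real_inner_self_eq_norm_mul_norm]
      field_simp
    have hnorm : ‖y - x₀‖ = δ := by
      rw [hydef]
      simp only [add_sub_cancel_left]
      rw [norm_smul, hnu, Real.norm_eq_abs, abs_of_pos hδpos, mul_one]
    have hzb : ‖H y - H x₀ - (inner ℝ g (y - x₀) : ℝ)‖ ≤ ε * ‖y - x₀‖ := hz
    rw [hinner, hnorm, Real.norm_eq_abs] at hzb
    have hHy : mH H x + δ * ‖g‖ - ε * δ ≤ H y := by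
      have := (abs_le.1 hzb).1
      rw [hmax]; linarith
    have hmem : H y ≤ mH H z := by
      apply le_mH H hc
      calc ‖y‖ ≤ ‖x₀‖ + ‖δ • u‖ := norm_add_le _ _
        _ ≤ x + δ := by
            rw [norm_smul, hnu, Real.norm_eq_abs, abs_of_pos hδpos, mul_one]
            linarith
        _ = z := by rw [hδdef]; ring
    rw [slope_def_field, ← hδdef, le_div_iff₀ hδpos]
    have h1 : (A₀ * mH H x ^ α) * δ ≤ ‖g‖ * δ :=
      mul_le_mul_of_nonneg_right hg hδpos.le
    nlinarith [hHy, hmem, h1]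
  -- the key differential inequality
  have key : ∀ s r : ℝ, 0 < s → s < r → r < R →
      c * (r - s) ≤ mH H r ^ (1 - α) - mH H s ^ (1 - α) := by
    intro s r hs hsr hrR
    set φ : ℝ → ℝ := fun t => mH H t ^ (1 - α) with hφdef
    clear_value φ
    have hφcont : ContinuousOn φ (Icc s r) := by
      rw [hφdef]
      apply ContinuousOn.rpow_const
      · exact (mH_contOn H hc (R := R)).mono
          (Icc_subset_Icc hs.le (by linarith))
      · exact fun x _ => Or.inr (by linarith)
    have main : ∀ ⦃t⦄, t ∈ Icc s r → -φ t ≤ -φ s + (-c) * (t - s) := by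
      apply image_le_of_liminf_slope_right_le_deriv_boundary
        (f := fun t => -φ t) (B := fun t => -φ s + (-c) * (t - s)) (B' := fun _ => -c)
      · exact hφcont.neg
      · simp
      · exact continuousOn_const.add (continuousOn_const.mul
          (continuousOn_id.sub continuousOn_const))
      · intro t _
        have hd : HasDerivWithinAt (fun v : ℝ => -φ s + (-c) * (v - s)) (-c * 1) (Ici t) t :=
          (((hasDerivWithinAt_id t (Ici t)).sub_const s).const_mul (-c)).const_add (-φ s)
        simpa using hd
      · -- liminf slope bound
        intro x hx q hq
        have hx0 : 0 < x := lt_of_lt_of_le hs hx.1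
        have hxR : x < R := lt_trans hx.2 hrR
        have hMx : 0 < mH H x := hMpos x ⟨hx0, hxR⟩
        set M := mH H x with hMdef
        set K₀ := A₀ * M ^ α with hK₀def
        set β := M ^ (-α) with hβdef
        have hK₀pos : 0 < K₀ := mul_pos hA₀ (Real.rpow_pos_of_pos hMx α)
        have hβpos : 0 < β := Real.rpow_pos_of_pos hMx (-α)
        have hMα : M ^ (-α) * M ^ α = 1 := by
          rw [Real.rpow_neg hMx.le]
          exact inv_mul_cancel₀ (Real.rpow_pos_of_pos hMx α).ne'
        clear_value β K₀
        have hprod : (1 - α) * β * K₀ = c := by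
          rw [hβdef, hK₀def, hcdef]
          calc (1-α) * M^(-α) * (A₀ * M^α) = (1-α) * A₀ * (M^(-α) * M^α) := by ring
            _ = (1-α) * A₀ := by rw [hMα, mul_one]
        -- choose ε
        have hcont0 : Filter.Tendsto (fun e : ℝ => (1 - α) * (β - e) * (K₀ - e)) (𝓝 0)
            (𝓝 ((1 - α) * (β - 0) * (K₀ - 0))) := by
          refine Filter.Tendsto.mul (Filter.Tendsto.mul tendsto_const_nhds ?_) ?_
          · exact (continuous_const.sub continuous_id).tendsto 0
          · exact (continuous_const.sub continuous_id).tendsto 0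
        have hval : -q < (1 - α) * (β - 0) * (K₀ - 0) := by
          simp only [sub_zero]
          rw [hprod]; linarith
        have hev1 : ∀ᶠ e in 𝓝 (0:ℝ), -q < (1 - α) * (β - e) * (K₀ - e) :=
          hcont0.eventually (eventually_gt_nhds hval)
        have hev2 : ∀ᶠ e in 𝓝 (0:ℝ), e < β := eventually_lt_nhds hβpos
        have hev3 : ∀ᶠ e in 𝓝 (0:ℝ), e < K₀ := eventually_lt_nhds hK₀pos
        obtain ⟨ε, ⟨⟨hε1, hε2⟩, hε3⟩, hε0⟩ :=
          ((((hev1.and hev2).and hev3).filter_mono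
            (nhdsWithin_le_nhds (s := Ioi (0:ℝ)))).and self_mem_nhdsWithin).exists
        -- now combine eventual facts
        have E1 := slope_lb x hx0 hxR ε hε0
        have hmc : ContinuousAt (mH H) x :=
          (mH_contOn H hc (R := R)).continuousAt
            (Icc_mem_nhds (by linarith) (by linarith))
        have hmc2 : ContinuousAt (fun z => mH H z ^ (-α)) x :=
          hmc.rpow_const (Or.inl hMx.ne')
        have E2 : ∀ᶠ z in 𝓝[>] x, β - ε < mH H z ^ (-α) := by
          have hlt : β - ε < (fun z => mH H z ^ (-α)) x := by
            show β - ε < mH H x ^ (-α)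
            rw [← hMdef, ← hβdef]
            linarith
          exact (hmc2.eventually (eventually_gt_nhds hlt)).filter_mono nhdsWithin_le_nhds
        apply Filter.Eventually.frequently
        filter_upwards [E1, E2, self_mem_nhdsWithin] with z hz1 hz2 hz3
        rw [mem_Ioi] at hz3
        have hd : 0 < z - x := sub_pos.2 hz3
        have hmz : M ≤ mH H z := by rw [hMdef]; exact mH_mono H hc hx0.le hz3.le
        -- concavity bound
        have hconc : (1 - α) * mH H z ^ (-α) * (mH H z - M) ≤ φ z - φ x := by
          have hcb := rpow_concave_bound (p := 1 - α) (a := M) (b := mH H z)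
            (by linarith) (by linarith) hMx hmz
          have he : (1 : ℝ) - α - 1 = -α := by ring
          rw [he] at hcb
          simpa [hφdef, hMdef] using hcb
        have hs1 : K₀ - ε ≤ (mH H z - M) / (z - x) := by
          rw [slope_def_field] at hz1
          rw [hK₀def, hMdef]
          exact hz1
        have hs2 : β - ε ≤ mH H z ^ (-α) := hz2.le
        have h3 : (1 - α) * (β - ε) * (K₀ - ε)
            ≤ (1 - α) * mH H z ^ (-α) * ((mH H z - M) / (z - x)) := by
          have hmul : (β - ε) * (K₀ - ε) ≤ mH H z ^ (-α) * ((mH H z - M) / (z - x)) :=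
            mul_le_mul hs2 hs1 (by linarith) ((sub_pos.2 hε2).le.trans hs2)
          have hm2 := mul_le_mul_of_nonneg_left hmul (show (0:ℝ) ≤ 1 - α by linarith)
          calc (1 - α) * (β - ε) * (K₀ - ε) = (1 - α) * ((β - ε) * (K₀ - ε)) := by ring
            _ ≤ (1 - α) * (mH H z ^ (-α) * ((mH H z - M) / (z - x))) := hm2
            _ = (1 - α) * mH H z ^ (-α) * ((mH H z - M) / (z - x)) := by ring
        have h1 : (1 - α) * mH H z ^ (-α) * (mH H z - M) / (z - x) ≤ (φ z - φ x) / (z - x) :=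
          (div_le_div_iff_of_pos_right hd).2 hconc
        have h2 : (1 - α) * mH H z ^ (-α) * (mH H z - M) / (z - x)
            = (1 - α) * mH H z ^ (-α) * ((mH H z - M) / (z - x)) := by ring
        have hgoal : -q < (φ z - φ x) / (z - x) := by
          calc -q < (1 - α) * (β - ε) * (K₀ - ε) := hε1
            _ ≤ (1 - α) * mH H z ^ (-α) * ((mH H z - M) / (z - x)) := h3
            _ = (1 - α) * mH H z ^ (-α) * (mH H z - M) / (z - x) := h2.symm
            _ ≤ (φ z - φ x) / (z - x) := h1
        have hslope_eq : slope (fun t => -φ t) x z = -((φ z - φ x) / (z - x)) := by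
          rw [slope_def_field]; ring
        rw [hslope_eq]
        linarith
    have hmain := main (right_mem_Icc.2 hsr.le)
    simp only [hφdef] at hmain
    linarith
  refine ⟨?_, fun s r hs hsr hrR => key s r hs hsr hrR, ?_⟩
  · intro s hs r hr hsr
    have hk := key s r hs.1 hsr hr.2
    have hpx : 0 < c * (r - s) := mul_pos hcpos (by linarith)
    by_contra hle
    push_neg at hle
    have := Real.rpow_le_rpow (hMpos r hr).le hle (by linarith : (0:ℝ) ≤ 1 - α)
    linarith
  · intro r hr
    have hstep : ∀ s, s ∈ Ioo (0:ℝ) r → c * (r - s) ≤ mH H r ^ (1 - α) := by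
      intro s hs
      have hk := key s r hs.1 hs.2 hr.2
      have hps : 0 < mH H s ^ (1 - α) :=
        Real.rpow_pos_of_pos (hMpos s ⟨hs.1, hs.2.trans hr.2⟩) _
      linarith
    have hlim : Filter.Tendsto (fun s : ℝ => c * (r - s)) (𝓝[>] 0) (𝓝 (c * (r - 0))) :=
      ((continuous_const.mul (continuous_const.sub continuous_id)).tendsto 0).mono_left
        nhdsWithin_le_nhds
    have hle : c * (r - 0) ≤ mH H r ^ (1 - α) := by
      apply le_of_tendsto hlim
      filter_upwards [self_mem_nhdsWithin,
        (eventually_lt_nhds hr.1).filter_mono (nhdsWithin_le_nhds (s := Ioi (0:ℝ)))]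
        with s hs1 hs2
      exact hstep s ⟨hs1, hs2⟩
    rw [sub_zero] at hle
    have h0 : (0:ℝ) ≤ c * r := mul_nonneg hcpos.le hr.1.le
    have h1 : (c * r) ^ (1/(1-α)) ≤ (mH H r ^ (1-α)) ^ (1/(1-α)) :=
      Real.rpow_le_rpow h0 hle (div_nonneg (by norm_num) (by linarith))
    have h2 : (mH H r ^ (1-α)) ^ (1/(1-α)) = mH H r := by
      rw [← Real.rpow_mul (hMpos r hr).le,
        mul_one_div_cancel (by linarith : (1:ℝ) - α ≠ 0), Real.rpow_one]
    rw [← Real.mul_rpow hcpos.le hr.1.le]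
    rw [h2] at h1
    exact h1
end
end
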